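/- In Kingman's model, for each 0 < a ≤ 1 let p^{a,*} denote the total-variation limit of the sequence started from δ_a with mutant distribution q^a (these limits exist). Then p^{a,*} converges weakly to p^{1,*} as a tends to 1 from the left. -/

import Mathlib

open MeasureTheory Set Filter

/-- Kingman's iteration: `p_i(dx) = (1-β) x p_{i-1}(dx) / ∫ y p_{i-1}(dy) + β q(dx)`,
with the convention `p_i = (1-β) p_{i-1} + β q` when `p_{i-1} = δ₀`
(i.e. when `∫ y p_{i-1}(dy) = 0`, in which case the density below is `1`). -/
noncomputable def kingman (β : ℝ) (q p₀ : MeasureTheory.Measure ℝ) :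
    ℕ → MeasureTheory.Measure ℝ
  | 0 => p₀
  | i + 1 =>
      ENNReal.ofReal (1 - β) •
          ((kingman β q p₀ i).withDensity fun x =>
            ENNReal.ofReal
              (if 0 < ∫ y, y ∂(kingman β q p₀ i) then x / ∫ y, y ∂(kingman β q p₀ i)
               else 1))
        + ENNReal.ofReal β • q

/-- Convergence in total variation (uniform convergence over all measurable sets). -/
def TendstoTV (p : ℕ → MeasureTheory.Measure ℝ) (μ : MeasureTheory.Measure ℝ) : Prop :=
  ∀ ε : ℝ, 0 < ε → ∃ N : ℕ, ∀ i ≥ N, ∀ A : Set ℝ, MeasurableSet A →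
    |((p i) A).toReal - (μ A).toReal| < ε

/-- Weak convergence of measures (tested against bounded continuous functions). -/
def TendstoWeak (p : ℕ → MeasureTheory.Measure ℝ) (μ : MeasureTheory.Measure ℝ) : Prop :=
  ∀ f : BoundedContinuousFunction ℝ ℝ,
    Filter.Tendsto (fun i => ∫ x, f x ∂(p i)) Filter.atTop (nhds (∫ x, f x ∂μ))

/-- The supremum `m_u` of the (closed) support of a probability measure `u` on `[0,1]`:
the smallest `x` with no mass strictly above it. -/
noncomputable def msupp (u : MeasureTheory.Measure ℝ) : ℝ :=
  sInf {x : ℝ | u (Set.Ioi x) = 0}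

/-- `h^a`: the pushforward of `h` under `x ↦ min x a`, i.e. `h` on `[0,a)` plus
`h([a,∞))·δ_a`. -/
noncomputable def trunc (a : ℝ) (h : MeasureTheory.Measure ℝ) : MeasureTheory.Measure ℝ :=
  MeasureTheory.Measure.map (fun x => min x a) h

open scoped ENNReal NNReal

set_option maxHeartbeats 1000000

namespace Stmt14


/-- `Psi y x = (1 - x/y)⁻¹` as an extended nonneg real. -/
noncomputable def Psi (y x : ℝ) : ℝ≥0∞ := (1 - ENNReal.ofReal (x / y))⁻¹

lemma measurable_psi (y : ℝ) : Measurable (Psi y) := by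
  apply Measurable.inv
  exact measurable_const.sub (ENNReal.measurable_ofReal.comp (measurable_id.div_const y))

lemma psi_mono {y : ℝ} (hy : 0 < y) : Monotone (Psi y) := by
  intro c d hcd
  apply ENNReal.inv_le_inv.2
  apply tsub_le_tsub_left
  apply ENNReal.ofReal_le_ofReal
  gcongr

/-- antitone in `y` for nonneg `x`. -/
lemma psi_anti {x y y' : ℝ} (hx : 0 ≤ x) (hy : 0 < y) (hyy : y ≤ y') :
    Psi y' x ≤ Psi y x := by
  apply ENNReal.inv_le_inv.2
  apply tsub_le_tsub_left
  apply ENNReal.ofReal_le_ofReal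
  gcongr

lemma psi_eq_ofReal {x y : ℝ} (hx : 0 ≤ x) (hxy : x < y) :
    Psi y x = ENNReal.ofReal ((1 - x / y)⁻¹) := by
  have hy : 0 < y := hx.trans_lt hxy
  have h1 : x / y < 1 := (div_lt_one hy).2 hxy
  have h2 : (0:ℝ) < 1 - x / y := by linarith
  rw [Psi, ← ENNReal.ofReal_one, ← ENNReal.ofReal_sub _ (by positivity),
    ENNReal.ofReal_inv_of_pos h2]

lemma psi_ne_top {x y : ℝ} (hx : 0 ≤ x) (hxy : x < y) : Psi y x ≠ ∞ := by
  rw [psi_eq_ofReal hx hxy]; exact ENNReal.ofReal_ne_top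

lemma psi_toReal {x y : ℝ} (hx : 0 ≤ x) (hxy : x < y) :
    (Psi y x).toReal = (1 - x / y)⁻¹ := by
  have hy : 0 < y := hx.trans_lt hxy
  have h1 : x / y < 1 := (div_lt_one hy).2 hxy
  have h2 : (0:ℝ) < 1 - x / y := by linarith
  rw [psi_eq_ofReal hx hxy, ENNReal.toReal_ofReal (by positivity)]

lemma psi_top {x y : ℝ} (hy : 0 < y) (hxy : y ≤ x) : Psi y x = ∞ := by
  have : (1:ℝ) ≤ x / y := (one_le_div hy).2 hxy
  rw [Psi, tsub_eq_zero_of_le (by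
    rw [← ENNReal.ofReal_one]; exact ENNReal.ofReal_le_ofReal this), ENNReal.inv_zero]

lemma psi_zero {y : ℝ} (hy : y ≠ 0) : Psi y 0 = 1 := by
  simp [Psi, zero_div]

lemma one_le_psi (y x : ℝ) : 1 ≤ Psi y x := by
  rw [Psi]
  conv_lhs => rw [← inv_one]
  exact ENNReal.inv_le_inv.2 tsub_le_self

lemma psi_le_of_le {x y c t : ℝ} (hx : 0 ≤ x) (hxc : x ≤ c) (hct : c < t) (hty : t ≤ y) :
    (Psi y x).toReal ≤ (1 - c / t)⁻¹ := by
  have hc : 0 ≤ c := hx.trans hxc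
  have ht : 0 < t := hc.trans_lt hct
  have hy : 0 < y := ht.trans_le hty
  have hxy : x < y := lt_of_le_of_lt hxc (hct.trans_le hty)
  rw [psi_toReal hx hxy]
  have h1 : x / y ≤ c / t := by
    calc x / y ≤ c / y := by gcongr
    _ ≤ c / t := by gcongr
  have h2 : (0:ℝ) < 1 - c / t := by
    have : c / t < 1 := (div_lt_one ht).2 hct
    linarith
  exact inv_anti₀ h2 (by linarith)

/-- key strict comparison: for `0 ≤ x ≤ 1 ≤ u < t`,
`Psi t x + (u⁻¹ - t⁻¹)·x ≤ Psi u x`. -/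
lemma psi_strict {u t x : ℝ} (hu : 1 ≤ u) (hut : u < t) (hx : 0 ≤ x) (hx1 : x ≤ 1) :
    Psi t x + ENNReal.ofReal ((u⁻¹ - t⁻¹) * x) ≤ Psi u x := by
  have hu0 : 0 < u := lt_of_lt_of_le one_pos hu
  have ht0 : 0 < t := hu0.trans hut
  rcases lt_or_ge x u with hxu | hxu
  · -- real computation
    have hxt : x < t := hxu.trans hut
    have hA : (0:ℝ) < 1 - x / u := by
      have : x / u < 1 := (div_lt_one hu0).2 hxu; linarith
    have hB : (0:ℝ) < 1 - x / t := by
      have : x / t < 1 := (div_lt_one ht0).2 hxt; linarith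
    have hδ : (0:ℝ) ≤ u⁻¹ - t⁻¹ := by
      have := inv_anti₀ hu0 hut.le; linarith
    rw [psi_eq_ofReal hx hxu, psi_eq_ofReal hx hxt,
      ← ENNReal.ofReal_add (by positivity) (by positivity)]
    apply ENNReal.ofReal_le_ofReal
    -- (1 - x/t)⁻¹ + (u⁻¹ - t⁻¹) x ≤ (1 - x/u)⁻¹
    have hAB : (1 - x/u) * (1 - x/t) ≤ 1 := by
      nlinarith [div_nonneg hx hu0.le, div_nonneg hx ht0.le]
    have hiAB : 1 ≤ (1 - x/u)⁻¹ * (1 - x/t)⁻¹ := by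
      rw [← mul_inv]
      exact (one_le_inv₀ (mul_pos hA hB)).2 hAB
    have diff : (1 - x/u)⁻¹ - (1 - x/t)⁻¹
        = ((1 - x/t) - (1 - x/u)) * ((1 - x/u)⁻¹ * (1 - x/t)⁻¹) := by
      have h1 : u - x ≠ 0 := sub_ne_zero.2 hxu.ne'
      have h2 : t - x ≠ 0 := sub_ne_zero.2 hxt.ne'
      field_simp
    have hBA : (1 - x/t) - (1 - x/u) = x * (u⁻¹ - t⁻¹) := by
      field_simp
      ring
    have hstep : x * (u⁻¹ - t⁻¹) * ((1 - x/u)⁻¹ * (1 - x/t)⁻¹) ≥ x * (u⁻¹ - t⁻¹) * 1 :=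
      mul_le_mul_of_nonneg_left hiAB (mul_nonneg hx hδ)
    nlinarith [diff, hBA, hstep]
  · rw [psi_top hu0 hxu]
    exact le_top



lemma measurable_minc (a : ℝ) : Measurable fun x : ℝ => min x a :=
  measurable_id.min measurable_const

lemma trunc_apply (a : ℝ) (q : Measure ℝ) {A : Set ℝ} (hA : MeasurableSet A) :
    trunc a q A = q ((fun x => min x a) ⁻¹' A) :=
  Measure.map_apply (measurable_minc a) hA

lemma isProb_trunc (a : ℝ) (q : Measure ℝ) [IsProbabilityMeasure q] :
    IsProbabilityMeasure (trunc a q) :=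
  Measure.isProbabilityMeasure_map (measurable_minc a).aemeasurable

lemma ae_of_compl_null {q : Measure ℝ} {s : Set ℝ} (h : q sᶜ = 0) : ∀ᵐ x ∂q, x ∈ s :=
  ae_iff.2 (by exact h)

lemma trunc_compl {q : Measure ℝ} (hq : q ((Icc (0:ℝ) 1)ᶜ) = 0) {a : ℝ}
    (ha : a ∈ Set.Ioc (0:ℝ) 1) : trunc a q ((Icc 0 a)ᶜ) = 0 := by
  rw [trunc_apply a q (measurableSet_Icc.compl)]
  apply measure_mono_null _ hq
  intro x hx
  simp only [Set.mem_preimage, Set.mem_compl_iff] at hx ⊢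
  intro hmem
  exact hx ⟨le_min hmem.1 ha.1.le, min_le_right x a⟩

lemma step_eval (β : ℝ) (Q p₀ : Measure ℝ) (i : ℕ)
    (hm : 0 < ∫ y, y ∂(kingman β Q p₀ i)) {A : Set ℝ} (hA : MeasurableSet A) :
    kingman β Q p₀ (i+1) A
      = ENNReal.ofReal (1-β) *
          ((ENNReal.ofReal (∫ y, y ∂(kingman β Q p₀ i)))⁻¹ *
            ∫⁻ x in A, ENNReal.ofReal x ∂(kingman β Q p₀ i))
        + ENNReal.ofReal β * Q A := by
  show (ENNReal.ofReal (1 - β) •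
          ((kingman β Q p₀ i).withDensity fun x =>
            ENNReal.ofReal
              (if 0 < ∫ y, y ∂(kingman β Q p₀ i) then x / ∫ y, y ∂(kingman β Q p₀ i)
               else 1))
        + ENNReal.ofReal β • Q) A = _
  rw [Measure.add_apply, Measure.smul_apply, Measure.smul_apply, smul_eq_mul, smul_eq_mul,
    withDensity_apply _ hA]
  congr 1
  congr 1
  have heq : ∀ x : ℝ, ENNReal.ofReal
      (if 0 < ∫ y, y ∂(kingman β Q p₀ i) then x / ∫ y, y ∂(kingman β Q p₀ i) else 1)
      = (ENNReal.ofReal (∫ y, y ∂(kingman β Q p₀ i)))⁻¹ * ENNReal.ofReal x := by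
    intro x
    rw [if_pos hm, ENNReal.ofReal_div_of_pos hm, div_eq_mul_inv, mul_comm]
  simp_rw [heq]
  rw [lintegral_const_mul _ ENNReal.measurable_ofReal]

lemma iter_props {β : ℝ} (hβ : β ∈ Set.Ioo (0:ℝ) 1) {q : Measure ℝ} [IsProbabilityMeasure q]
    (hq : q ((Icc (0:ℝ) 1)ᶜ) = 0) {a : ℝ} (ha : a ∈ Set.Ioc (0:ℝ) 1) (i : ℕ) :
    (kingman β (trunc a q) (Measure.dirac a) i) ((Icc 0 a)ᶜ) = 0 ∧
    (kingman β (trunc a q) (Measure.dirac a) i) Set.univ = 1 ∧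
    0 < (kingman β (trunc a q) (Measure.dirac a) i) {a} := by
  induction i with
  | zero =>
    refine ⟨?_, ?_, ?_⟩
    · show Measure.dirac a _ = 0
      rw [Measure.dirac_apply' _ measurableSet_Icc.compl]
      simp [Set.indicator, ha.1.le]
    · simp [kingman]
    · show 0 < Measure.dirac a {a}
      rw [Measure.dirac_apply' _ (measurableSet_singleton a)]
      simp
  | succ i ih =>
    obtain ⟨hnull, huniv, hatom⟩ := ih
    set P := kingman β (trunc a q) (Measure.dirac a) i with hP
    have hae : ∀ᵐ x ∂P, x ∈ Icc 0 a := ae_of_compl_null hnull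
    have hprob : IsProbabilityMeasure P := ⟨huniv⟩
    set mE := ∫⁻ x, ENNReal.ofReal x ∂P with hmE
    have hmE_le : mE ≤ 1 := by
      calc mE ≤ ∫⁻ _, 1 ∂P := lintegral_mono_ae (hae.mono fun x hx =>
            ENNReal.ofReal_le_one.2 (hx.2.trans ha.2))
      _ = 1 := by simp
    have hmE_top : mE ≠ ⊤ := (lt_of_le_of_lt hmE_le ENNReal.one_lt_top).ne
    have hsing : ENNReal.ofReal a * P {a} ≤ mE := by
      rw [← lintegral_singleton (fun x => ENNReal.ofReal x) a]
      exact setLIntegral_le_lintegral _ _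
    have hPa_top : P {a} ≠ ⊤ := (lt_of_le_of_lt (prob_le_one) ENNReal.one_lt_top).ne
    have hmE_pos : 0 < mE :=
      lt_of_lt_of_le (ENNReal.mul_pos (ENNReal.ofReal_pos.2 ha.1).ne' hatom.ne') hsing
    have hm_int : Integrable (fun y : ℝ => y) P := by
      refine ⟨measurable_id.aestronglyMeasurable, ?_⟩
      rw [hasFiniteIntegral_iff_norm]
      calc ∫⁻ y, ENNReal.ofReal ‖y‖ ∂P ≤ ∫⁻ _, 1 ∂P := lintegral_mono_ae (hae.mono fun x hx => by
            rw [Real.norm_eq_abs, abs_of_nonneg hx.1]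
            exact ENNReal.ofReal_le_one.2 (hx.2.trans ha.2))
      _ = 1 := by simp
      _ < ⊤ := ENNReal.one_lt_top
    have hm_eq : ∫ y, y ∂P = mE.toReal :=
      integral_eq_lintegral_of_nonneg_ae (hae.mono fun x hx => hx.1)
        measurable_id.aestronglyMeasurable
    have hm_pos : 0 < ∫ y, y ∂P := by
      rw [hm_eq]; exact ENNReal.toReal_pos hmE_pos.ne' hmE_top
    have hofm : ENNReal.ofReal (∫ y, y ∂P) = mE := by
      rw [hm_eq, ENNReal.ofReal_toReal hmE_top]
    have key : ∀ A : Set ℝ, MeasurableSet A →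
        kingman β (trunc a q) (Measure.dirac a) (i+1) A
          = ENNReal.ofReal (1-β) * (mE⁻¹ * ∫⁻ x in A, ENNReal.ofReal x ∂P)
            + ENNReal.ofReal β * trunc a q A := by
      intro A hA
      rw [step_eval β (trunc a q) (Measure.dirac a) i hm_pos hA, ← hP, hofm]
    refine ⟨?_, ?_, ?_⟩
    · rw [key _ measurableSet_Icc.compl]
      rw [setLIntegral_measure_zero _ _ hnull, trunc_compl hq ha]
      simp
    · rw [key _ MeasurableSet.univ]
      rw [setLIntegral_univ, ← hmE, ENNReal.inv_mul_cancel hmE_pos.ne' hmE_top,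
        mul_one, (isProb_trunc a q).measure_univ, mul_one,
        ← ENNReal.ofReal_add (by linarith [hβ.2]) (by linarith [hβ.1]), sub_add_cancel,
        ENNReal.ofReal_one]
    · rw [key _ (measurableSet_singleton a), lintegral_singleton]
      apply lt_of_lt_of_le _ le_self_add
      apply ENNReal.mul_pos (ENNReal.ofReal_pos.2 (by linarith [hβ.2])).ne'
      apply (ENNReal.mul_pos (ENNReal.inv_ne_zero.2 hmE_top) _).ne'
      exact (ENNReal.mul_pos (ENNReal.ofReal_pos.2 ha.1).ne' hatom.ne').ne'



noncomputable def Yb (β : ℝ) (ν : Measure ℝ) : ℝ := (∫ y, y ∂ν) / (1-β)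

variable {β : ℝ} {q : Measure ℝ} {a : ℝ} {ν : Measure ℝ}

lemma tv_apply (hTV : TendstoTV (kingman β (trunc a q) (Measure.dirac a)) ν)
    {A : Set ℝ} (hA : MeasurableSet A) :
    Tendsto (fun i => ((kingman β (trunc a q) (Measure.dirac a) i) A).toReal) atTop
      (nhds ((ν A).toReal)) := by
  rw [Metric.tendsto_atTop]
  intro ε hε
  obtain ⟨N, hN⟩ := hTV ε hε
  exact ⟨N, fun i hi => by rw [Real.dist_eq]; exact hN i hi A hA⟩

lemma tv_prob (hβ : β ∈ Set.Ioo (0:ℝ) 1) [IsProbabilityMeasure q]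
    (hq : q ((Icc (0:ℝ) 1)ᶜ) = 0) (ha : a ∈ Set.Ioc (0:ℝ) 1)
    (hTV : TendstoTV (kingman β (trunc a q) (Measure.dirac a)) ν) :
    IsProbabilityMeasure ν := by
  have h1 := tv_apply hTV MeasurableSet.univ
  have h2 : ∀ i : ℕ, ((kingman β (trunc a q) (Measure.dirac a) i) Set.univ).toReal = 1 :=
    fun i => by rw [(iter_props hβ hq ha i).2.1]; simp
  have h1' : Tendsto (fun _ : ℕ => (1:ℝ)) atTop (nhds ((ν Set.univ).toReal)) := by
    simpa [h2] using h1
  have h3 : (ν Set.univ).toReal = 1 := tendsto_nhds_unique h1' tendsto_const_nhds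
  constructor
  rcases eq_or_ne (ν Set.univ) ⊤ with h | h
  · rw [h] at h3; simp at h3
  · rw [← ENNReal.ofReal_toReal h, h3, ENNReal.ofReal_one]

lemma tv_null_compl (hβ : β ∈ Set.Ioo (0:ℝ) 1) [IsProbabilityMeasure q]
    (hq : q ((Icc (0:ℝ) 1)ᶜ) = 0) (ha : a ∈ Set.Ioc (0:ℝ) 1)
    (hTV : TendstoTV (kingman β (trunc a q) (Measure.dirac a)) ν) :
    ν ((Icc (0:ℝ) a)ᶜ) = 0 := by
  have := tv_prob hβ hq ha hTV
  have h1 := tv_apply hTV (A := (Icc (0:ℝ) a)ᶜ) measurableSet_Icc.compl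
  have h2 : ∀ i : ℕ, ((kingman β (trunc a q) (Measure.dirac a) i) ((Icc (0:ℝ) a)ᶜ)).toReal = 0 :=
    fun i => by rw [(iter_props hβ hq ha i).1]; simp
  have h1' : Tendsto (fun _ : ℕ => (0:ℝ)) atTop (nhds ((ν ((Icc (0:ℝ) a)ᶜ)).toReal)) := by
    simpa [h2] using h1
  have h3 : (ν ((Icc (0:ℝ) a)ᶜ)).toReal = 0 := tendsto_nhds_unique h1' tendsto_const_nhds
  rcases (ENNReal.toReal_eq_zero_iff _).1 h3 with h | h
  · exact h
  · exact absurd h (measure_ne_top ν _)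

lemma layer {a : ℝ} (ha : a ∈ Set.Ioc (0:ℝ) 1) (μ : Measure ℝ) [IsProbabilityMeasure μ]
    (hμ : μ ((Icc (0:ℝ) a)ᶜ) = 0) {A : Set ℝ} (hA : MeasurableSet A) :
    ∫⁻ x in A, ENNReal.ofReal x ∂μ = ∫⁻ t in Ioc (0:ℝ) 1, μ ({x | t < x} ∩ A) := by
  have hres : 0 ≤ᵐ[μ.restrict A] (fun x : ℝ => x) :=
    ae_restrict_of_ae ((ae_of_compl_null hμ).mono fun x hx => hx.1)
  rw [lintegral_eq_lintegral_meas_lt (μ.restrict A) hres aemeasurable_id]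
  have hsets : ∀ t : ℝ, (μ.restrict A) {x : ℝ | t < x} = μ ({x | t < x} ∩ A) := fun t =>
    Measure.restrict_apply measurableSet_Ioi
  simp_rw [hsets]
  rw [show Ioi (0:ℝ) = Ioc (0:ℝ) 1 ∪ Ioi 1 from (Set.Ioc_union_Ioi_eq_Ioi zero_le_one).symm]
  rw [lintegral_union measurableSet_Ioi (Set.Ioc_disjoint_Ioi le_rfl)]
  have hz : ∀ t ∈ Ioi (1:ℝ), μ ({x | t < x} ∩ A) = (fun _ => (0:ℝ≥0∞)) t := by
    intro t ht
    refine measure_mono_null ?_ hμ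
    intro x hx
    simp only [Set.mem_inter_iff, Set.mem_setOf_eq] at hx
    simp only [Set.mem_compl_iff, Set.mem_Icc, not_and, not_le]
    intro _
    exact lt_of_le_of_lt ha.2 (lt_trans ht hx.1)
  rw [setLIntegral_congr_fun_ae measurableSet_Ioi (ae_of_all _ hz)]
  simp

lemma tv_lint (hβ : β ∈ Set.Ioo (0:ℝ) 1) [IsProbabilityMeasure q]
    (hq : q ((Icc (0:ℝ) 1)ᶜ) = 0) (ha : a ∈ Set.Ioc (0:ℝ) 1)
    (hTV : TendstoTV (kingman β (trunc a q) (Measure.dirac a)) ν)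
    {A : Set ℝ} (hA : MeasurableSet A) :
    Tendsto (fun i => (∫⁻ x in A, ENNReal.ofReal x ∂(kingman β (trunc a q) (Measure.dirac a) i)).toReal)
      atTop (nhds ((∫⁻ x in A, ENNReal.ofReal x ∂ν).toReal)) := by
  have hνp := tv_prob hβ hq ha hTV
  have hνn := tv_null_compl hβ hq ha hTV
  rw [Metric.tendsto_atTop]
  intro ε hε
  obtain ⟨N, hN⟩ := hTV (ε/2) (half_pos hε)
  refine ⟨N, fun i hi => ?_⟩
  have hPp : IsProbabilityMeasure (kingman β (trunc a q) (Measure.dirac a) i) :=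
    ⟨(iter_props hβ hq ha i).2.1⟩
  have hPn := (iter_props hβ hq ha i).1
  rw [layer ha _ hPn hA, layer ha ν hνn hA, Real.dist_eq]
  set Fi := fun t : ℝ => (kingman β (trunc a q) (Measure.dirac a) i) ({x | t < x} ∩ A) with hFi
  set Fν := fun t : ℝ => ν ({x | t < x} ∩ A) with hFν
  have hmeas : ∀ t : ℝ, MeasurableSet ({x : ℝ | t < x} ∩ A) := fun t =>
    measurableSet_Ioi.inter hA
  have key : ∀ t : ℝ, Fi t ≤ Fν t + ENNReal.ofReal (ε/2) ∧ Fν t ≤ Fi t + ENNReal.ofReal (ε/2) := by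
    intro t
    have h := hN i hi _ (hmeas t)
    rw [abs_sub_lt_iff] at h
    constructor
    · show (kingman β (trunc a q) (Measure.dirac a) i) ({x | t < x} ∩ A)
          ≤ ν ({x | t < x} ∩ A) + ENNReal.ofReal (ε/2)
      rw [← ENNReal.ofReal_toReal (measure_ne_top (kingman β (trunc a q) (Measure.dirac a) i) _),
        ← ENNReal.ofReal_toReal (measure_ne_top ν ({x | t < x} ∩ A)),
        ← ENNReal.ofReal_add ENNReal.toReal_nonneg (by linarith)]
      exact ENNReal.ofReal_le_ofReal (by linarith [h.1])
    · show ν ({x | t < x} ∩ A)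
          ≤ (kingman β (trunc a q) (Measure.dirac a) i) ({x | t < x} ∩ A) + ENNReal.ofReal (ε/2)
      rw [← ENNReal.ofReal_toReal (measure_ne_top (kingman β (trunc a q) (Measure.dirac a) i) _),
        ← ENNReal.ofReal_toReal (measure_ne_top ν ({x | t < x} ∩ A)),
        ← ENNReal.ofReal_add ENNReal.toReal_nonneg (by linarith)]
      exact ENNReal.ofReal_le_ofReal (by linarith [h.2])
  have hvol : (volume (Ioc (0:ℝ) 1)) = 1 := by
    rw [Real.volume_Ioc]; norm_num
  have hconst : ∀ (c : ℝ≥0∞), ∫⁻ _ in Ioc (0:ℝ) 1, c = c := fun c => by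
    rw [setLIntegral_const, hvol, mul_one]
  have hFνfin : ∫⁻ t in Ioc (0:ℝ) 1, Fν t ≠ ⊤ := by
    refine (lt_of_le_of_lt (le_trans (lintegral_mono fun t => ?_) (hconst 1).le) ENNReal.one_lt_top).ne
    exact prob_le_one
  have hFifin : ∫⁻ t in Ioc (0:ℝ) 1, Fi t ≠ ⊤ := by
    refine (lt_of_le_of_lt (le_trans (lintegral_mono fun t => ?_) (hconst 1).le) ENNReal.one_lt_top).ne
    exact prob_le_one
  have hI1 : ∫⁻ t in Ioc (0:ℝ) 1, Fi t ≤ (∫⁻ t in Ioc (0:ℝ) 1, Fν t) + ENNReal.ofReal (ε/2) := by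
    calc ∫⁻ t in Ioc (0:ℝ) 1, Fi t ≤ ∫⁻ t in Ioc (0:ℝ) 1, (Fν t + ENNReal.ofReal (ε/2)) :=
          lintegral_mono fun t => (key t).1
    _ = (∫⁻ t in Ioc (0:ℝ) 1, Fν t) + ENNReal.ofReal (ε/2) := by
          rw [lintegral_add_right _ measurable_const, hconst]
  have hI2 : ∫⁻ t in Ioc (0:ℝ) 1, Fν t ≤ (∫⁻ t in Ioc (0:ℝ) 1, Fi t) + ENNReal.ofReal (ε/2) := by
    calc ∫⁻ t in Ioc (0:ℝ) 1, Fν t ≤ ∫⁻ t in Ioc (0:ℝ) 1, (Fi t + ENNReal.ofReal (ε/2)) :=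
          lintegral_mono fun t => (key t).2
    _ = (∫⁻ t in Ioc (0:ℝ) 1, Fi t) + ENNReal.ofReal (ε/2) := by
          rw [lintegral_add_right _ measurable_const, hconst]
  have t1 : (∫⁻ t in Ioc (0:ℝ) 1, Fi t).toReal ≤ (∫⁻ t in Ioc (0:ℝ) 1, Fν t).toReal + ε/2 := by
    have := ENNReal.toReal_mono (by
      exact ENNReal.add_ne_top.2 ⟨hFνfin, ENNReal.ofReal_ne_top⟩) hI1
    rwa [ENNReal.toReal_add hFνfin ENNReal.ofReal_ne_top, ENNReal.toReal_ofReal (by linarith)] at this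
  have t2 : (∫⁻ t in Ioc (0:ℝ) 1, Fν t).toReal ≤ (∫⁻ t in Ioc (0:ℝ) 1, Fi t).toReal + ε/2 := by
    have := ENNReal.toReal_mono (by
      exact ENNReal.add_ne_top.2 ⟨hFifin, ENNReal.ofReal_ne_top⟩) hI2
    rwa [ENNReal.toReal_add hFifin ENNReal.ofReal_ne_top, ENNReal.toReal_ofReal (by linarith)] at this
  rw [abs_sub_lt_iff]
  constructor <;> linarith



variable {β : ℝ} {q : Measure ℝ} {a : ℝ} {ν : Measure ℝ}

lemma mean_eq {μ : Measure ℝ} (hμ : 0 ≤ᵐ[μ] (fun x : ℝ => x)) :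
    ∫ y, y ∂μ = (∫⁻ x, ENNReal.ofReal x ∂μ).toReal :=
  integral_eq_lintegral_of_nonneg_ae hμ measurable_id.aestronglyMeasurable

lemma mean_facts {μ : Measure ℝ} [IsProbabilityMeasure μ]
    (hμ : μ ((Icc (0:ℝ) a)ᶜ) = 0) (ha : a ∈ Set.Ioc (0:ℝ) 1) :
    ∫ y, y ∂μ = (∫⁻ x, ENNReal.ofReal x ∂μ).toReal ∧ (∫⁻ x, ENNReal.ofReal x ∂μ) ≤ 1 := by
  have hae : ∀ᵐ x ∂μ, x ∈ Icc 0 a := ae_of_compl_null hμ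
  refine ⟨mean_eq (hae.mono fun x hx => hx.1), ?_⟩
  calc ∫⁻ x, ENNReal.ofReal x ∂μ ≤ ∫⁻ _, 1 ∂μ := lintegral_mono_ae (hae.mono fun x hx =>
        ENNReal.ofReal_le_one.2 (hx.2.trans ha.2))
  _ = 1 := by simp

lemma mean_facts' {μ : Measure ℝ} [IsProbabilityMeasure μ]
    (hμ : μ ((Icc (0:ℝ) a)ᶜ) = 0) (ha : a ∈ Set.Ioc (0:ℝ) 1) :
    ENNReal.ofReal (∫ y, y ∂μ) = ∫⁻ x, ENNReal.ofReal x ∂μ := by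
  obtain ⟨h1, h2⟩ := mean_facts hμ ha
  rw [h1, ENNReal.ofReal_toReal (h2.trans_lt ENNReal.one_lt_top).ne]

lemma iter_m_pos (hβ : β ∈ Set.Ioo (0:ℝ) 1) [IsProbabilityMeasure q]
    (hq : q ((Icc (0:ℝ) 1)ᶜ) = 0) (ha : a ∈ Set.Ioc (0:ℝ) 1) (i : ℕ) :
    0 < ∫ y, y ∂(kingman β (trunc a q) (Measure.dirac a) i) := by
  obtain ⟨hnull, huniv, hatom⟩ := iter_props hβ hq ha i
  have hprob : IsProbabilityMeasure (kingman β (trunc a q) (Measure.dirac a) i) := ⟨huniv⟩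
  obtain ⟨h1, h2⟩ := mean_facts hnull ha
  have hsing : ENNReal.ofReal a * (kingman β (trunc a q) (Measure.dirac a) i) {a}
      ≤ ∫⁻ x, ENNReal.ofReal x ∂(kingman β (trunc a q) (Measure.dirac a) i) := by
    rw [← lintegral_singleton (fun x => ENNReal.ofReal x) a]
    exact setLIntegral_le_lintegral _ _
  have hpos : 0 < ∫⁻ x, ENNReal.ofReal x ∂(kingman β (trunc a q) (Measure.dirac a) i) :=
    lt_of_lt_of_le (ENNReal.mul_pos (ENNReal.ofReal_pos.2 ha.1).ne' hatom.ne') hsing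
  rw [h1]
  exact ENNReal.toReal_pos hpos.ne' (h2.trans_lt ENNReal.one_lt_top).ne

lemma mean_tendsto (hβ : β ∈ Set.Ioo (0:ℝ) 1) [IsProbabilityMeasure q]
    (hq : q ((Icc (0:ℝ) 1)ᶜ) = 0) (ha : a ∈ Set.Ioc (0:ℝ) 1)
    (hTV : TendstoTV (kingman β (trunc a q) (Measure.dirac a)) ν) :
    Tendsto (fun i => ∫ y, y ∂(kingman β (trunc a q) (Measure.dirac a) i)) atTop
      (nhds (∫ y, y ∂ν)) := by
  have hνp := tv_prob hβ hq ha hTV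
  have hνn := tv_null_compl hβ hq ha hTV
  have h := tv_lint hβ hq ha hTV MeasurableSet.univ
  simp only [Measure.restrict_univ] at h
  have h1 : ∀ i : ℕ, ∫ y, y ∂(kingman β (trunc a q) (Measure.dirac a) i)
      = (∫⁻ x, ENNReal.ofReal x ∂(kingman β (trunc a q) (Measure.dirac a) i)).toReal := by
    intro i
    have : IsProbabilityMeasure (kingman β (trunc a q) (Measure.dirac a) i) :=
      ⟨(iter_props hβ hq ha i).2.1⟩
    exact (mean_facts (iter_props hβ hq ha i).1 ha).1
  have h2 : ∫ y, y ∂ν = (∫⁻ x, ENNReal.ofReal x ∂ν).toReal := (mean_facts hνn ha).1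
  rw [h2]
  simpa [h1] using h

lemma mean_nonneg (hβ : β ∈ Set.Ioo (0:ℝ) 1) [IsProbabilityMeasure q]
    (hq : q ((Icc (0:ℝ) 1)ᶜ) = 0) (ha : a ∈ Set.Ioc (0:ℝ) 1)
    (hTV : TendstoTV (kingman β (trunc a q) (Measure.dirac a)) ν) :
    0 ≤ ∫ y, y ∂ν :=
  integral_nonneg_of_ae ((ae_of_compl_null (tv_null_compl hβ hq ha hTV)).mono fun x hx => hx.1)

lemma mean_lb (hβ : β ∈ Set.Ioo (0:ℝ) 1) [IsProbabilityMeasure q]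
    (hq : q ((Icc (0:ℝ) 1)ᶜ) = 0) (ha : a ∈ Set.Ioc (0:ℝ) 1)
    (hTV : TendstoTV (kingman β (trunc a q) (Measure.dirac a)) ν) :
    (1-β) * a ≤ ∫ y, y ∂ν := by
  by_contra hcon
  push_neg at hcon
  have hνnn := mean_nonneg hβ hq ha hTV
  set mν := ∫ y, y ∂ν with hmν
  set m'' := (mν + (1-β)*a)/2 with hm''
  have hb1 : (0:ℝ) < 1 - β := by linarith [hβ.2]
  have hmlt : mν < m'' := by rw [hm'']; linarith
  have hm2 : m'' < (1-β)*a := by rw [hm'']; linarith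
  have hm''pos : 0 < m'' := by rw [hm'']; nlinarith [ha.1]
  set ρ := ((1-β)*a)/m'' with hρdef
  have hρ : 1 < ρ := (one_lt_div hm''pos).2 hm2
  have hev : ∀ᶠ i in atTop, ∫ y, y ∂(kingman β (trunc a q) (Measure.dirac a) i) < m'' :=
    (mean_tendsto hβ hq ha hTV).eventually_lt_const hmlt
  obtain ⟨N, hN⟩ := eventually_atTop.1 hev
  have hstep : ∀ i, N ≤ i →
      ENNReal.ofReal ρ * (kingman β (trunc a q) (Measure.dirac a) i) {a}
        ≤ (kingman β (trunc a q) (Measure.dirac a) (i+1)) {a} := by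
    intro i hi
    have hm_pos := iter_m_pos hβ hq ha i
    rw [step_eval β (trunc a q) (Measure.dirac a) i hm_pos (measurableSet_singleton a),
      lintegral_singleton]
    refine le_trans ?_ le_self_add
    have key : ENNReal.ofReal ρ ≤ ENNReal.ofReal (1-β) *
        ((ENNReal.ofReal (∫ y, y ∂(kingman β (trunc a q) (Measure.dirac a) i)))⁻¹ *
          ENNReal.ofReal a) := by
      have h1 : ENNReal.ofReal (∫ y, y ∂(kingman β (trunc a q) (Measure.dirac a) i))
          ≤ ENNReal.ofReal m'' := ENNReal.ofReal_le_ofReal (hN i hi).le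
      calc ENNReal.ofReal ρ = ENNReal.ofReal ((1-β)*a) / ENNReal.ofReal m'' := by
            rw [hρdef, ENNReal.ofReal_div_of_pos hm''pos]
      _ = ENNReal.ofReal (1-β) * ((ENNReal.ofReal m'')⁻¹ * ENNReal.ofReal a) := by
            rw [ENNReal.ofReal_mul hb1.le, div_eq_mul_inv]
            ring
      _ ≤ _ :=
            mul_le_mul_right (mul_le_mul_left (ENNReal.inv_le_inv.2 h1) _) _
    calc ENNReal.ofReal ρ * (kingman β (trunc a q) (Measure.dirac a) i) {a}
        ≤ (ENNReal.ofReal (1-β) *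
            ((ENNReal.ofReal (∫ y, y ∂(kingman β (trunc a q) (Measure.dirac a) i)))⁻¹ *
              ENNReal.ofReal a)) * (kingman β (trunc a q) (Measure.dirac a) i) {a} :=
          mul_le_mul_left key _
    _ = ENNReal.ofReal (1-β) *
          ((ENNReal.ofReal (∫ y, y ∂(kingman β (trunc a q) (Measure.dirac a) i)))⁻¹ *
            (ENNReal.ofReal a * (kingman β (trunc a q) (Measure.dirac a) i) {a})) := by ring
  have hiter : ∀ k : ℕ, (ENNReal.ofReal ρ)^k * (kingman β (trunc a q) (Measure.dirac a) N) {a}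
      ≤ (kingman β (trunc a q) (Measure.dirac a) (N+k)) {a} := by
    intro k
    induction k with
    | zero => simp
    | succ k ih =>
      calc (ENNReal.ofReal ρ)^(k+1) * (kingman β (trunc a q) (Measure.dirac a) N) {a}
          = ENNReal.ofReal ρ * ((ENNReal.ofReal ρ)^k *
              (kingman β (trunc a q) (Measure.dirac a) N) {a}) := by ring
      _ ≤ ENNReal.ofReal ρ * (kingman β (trunc a q) (Measure.dirac a) (N+k)) {a} :=
            mul_le_mul_right ih _
      _ ≤ _ := hstep (N+k) (Nat.le_add_right N k)
  have hub : ∀ k : ℕ, ρ^k * ((kingman β (trunc a q) (Measure.dirac a) N) {a}).toReal ≤ 1 := by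
    intro k
    have hprob : IsProbabilityMeasure (kingman β (trunc a q) (Measure.dirac a) (N+k)) :=
      ⟨(iter_props hβ hq ha (N+k)).2.1⟩
    have h1 := (hiter k).trans prob_le_one
    have h2 := ENNReal.toReal_mono ENNReal.one_ne_top h1
    rwa [ENNReal.toReal_one, ENNReal.toReal_mul, ENNReal.toReal_pow,
      ENNReal.toReal_ofReal (by positivity)] at h2
  have hprobN : IsProbabilityMeasure (kingman β (trunc a q) (Measure.dirac a) N) :=
    ⟨(iter_props hβ hq ha N).2.1⟩
  have hc : 0 < ((kingman β (trunc a q) (Measure.dirac a) N) {a}).toReal :=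
    ENNReal.toReal_pos (iter_props hβ hq ha N).2.2.ne' (measure_ne_top _ _)
  obtain ⟨k, hk⟩ := ((tendsto_pow_atTop_atTop_of_one_lt hρ).eventually_ge_atTop
    (2/((kingman β (trunc a q) (Measure.dirac a) N) {a}).toReal)).exists
  have h2 : (2:ℝ) ≤ ρ^k * ((kingman β (trunc a q) (Measure.dirac a) N) {a}).toReal := by
    rw [div_le_iff₀ hc] at hk
    linarith
  linarith [hub k]



variable {β : ℝ} {q : Measure ℝ} {a : ℝ} {ν : Measure ℝ}

lemma toReal_expand {c b m : ℝ} (hc : 0 ≤ c) (hb : 0 ≤ b) (hm : 0 < m)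
    {L Q' : ℝ≥0∞} (hL : L ≠ ⊤) (hQ : Q' ≠ ⊤) :
    (ENNReal.ofReal c * ((ENNReal.ofReal m)⁻¹ * L) + ENNReal.ofReal b * Q').toReal
      = c * (m⁻¹ * L.toReal) + b * Q'.toReal := by
  have h1 : (ENNReal.ofReal m)⁻¹ ≠ ⊤ := ENNReal.inv_ne_top.2 (ENNReal.ofReal_pos.2 hm).ne'
  rw [ENNReal.toReal_add (ENNReal.mul_ne_top ENNReal.ofReal_ne_top (ENNReal.mul_ne_top h1 hL))
    (ENNReal.mul_ne_top ENNReal.ofReal_ne_top hQ),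
    ENNReal.toReal_mul, ENNReal.toReal_mul, ENNReal.toReal_mul, ENNReal.toReal_inv,
    ENNReal.toReal_ofReal hc, ENNReal.toReal_ofReal hb, ENNReal.toReal_ofReal hm.le]

lemma Y_pos (hβ : β ∈ Set.Ioo (0:ℝ) 1) [IsProbabilityMeasure q]
    (hq : q ((Icc (0:ℝ) 1)ᶜ) = 0) (ha : a ∈ Set.Ioc (0:ℝ) 1)
    (hTV : TendstoTV (kingman β (trunc a q) (Measure.dirac a)) ν) :
    a ≤ Yb β ν ∧ 0 < Yb β ν := by
  have hb1 : (0:ℝ) < 1 - β := by linarith [hβ.2]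
  have h := mean_lb hβ hq ha hTV
  constructor
  · rw [Yb, le_div_iff₀ hb1]
    linarith
  · have h0 : (0:ℝ) < (1-β)*a := by nlinarith [ha.1]
    rw [Yb]
    exact div_pos (lt_of_lt_of_le h0 h) hb1

lemma lint_fin (hβ : β ∈ Set.Ioo (0:ℝ) 1) [IsProbabilityMeasure q]
    (hq : q ((Icc (0:ℝ) 1)ᶜ) = 0) (ha : a ∈ Set.Ioc (0:ℝ) 1)
    (hTV : TendstoTV (kingman β (trunc a q) (Measure.dirac a)) ν)
    {A : Set ℝ} (hA : MeasurableSet A) :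
    ∫⁻ x in A, ENNReal.ofReal x ∂ν ≤ 1 := by
  have hνp := tv_prob hβ hq ha hTV
  exact (setLIntegral_le_lintegral _ _).trans (mean_facts (tv_null_compl hβ hq ha hTV) ha).2

/-- The fixed-point equation for the TV limit. -/
lemma fixed_pt (hβ : β ∈ Set.Ioo (0:ℝ) 1) [IsProbabilityMeasure q]
    (hq : q ((Icc (0:ℝ) 1)ᶜ) = 0) (ha : a ∈ Set.Ioc (0:ℝ) 1)
    (hTV : TendstoTV (kingman β (trunc a q) (Measure.dirac a)) ν)
    {A : Set ℝ} (hA : MeasurableSet A) :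
    ν A = ∫⁻ x in A, ENNReal.ofReal (x / Yb β ν) ∂ν + ENNReal.ofReal β * trunc a q A := by
  have hνp := tv_prob hβ hq ha hTV
  have hνn := tv_null_compl hβ hq ha hTV
  have hQp := isProb_trunc a q
  have hb1 : (0:ℝ) < 1 - β := by linarith [hβ.2]
  have hmν_pos : 0 < ∫ y, y ∂ν :=
    lt_of_lt_of_le (by nlinarith [ha.1] : (0:ℝ) < (1-β)*a) (mean_lb hβ hq ha hTV)
  have hL := tv_lint hβ hq ha hTV hA
  have hm := mean_tendsto hβ hq ha hTV
  have hseq : ∀ i : ℕ, ((kingman β (trunc a q) (Measure.dirac a) (i+1)) A).toReal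
      = (1-β) * ((∫ y, y ∂(kingman β (trunc a q) (Measure.dirac a) i))⁻¹ *
          (∫⁻ x in A, ENNReal.ofReal x ∂(kingman β (trunc a q) (Measure.dirac a) i)).toReal)
        + β * ((trunc a q) A).toReal := by
    intro i
    have hprob : IsProbabilityMeasure (kingman β (trunc a q) (Measure.dirac a) i) :=
      ⟨(iter_props hβ hq ha i).2.1⟩
    have hfin1 : (∫⁻ x in A, ENNReal.ofReal x ∂(kingman β (trunc a q) (Measure.dirac a) i)) ≠ ⊤ :=
      (((setLIntegral_le_lintegral _ _).trans
        (mean_facts (iter_props hβ hq ha i).1 ha).2).trans_lt ENNReal.one_lt_top).ne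
    rw [step_eval β (trunc a q) (Measure.dirac a) i (iter_m_pos hβ hq ha i) hA,
      toReal_expand hb1.le hβ.1.le (iter_m_pos hβ hq ha i) hfin1 (measure_ne_top _ _)]
  have hRHS : Tendsto (fun i => (1-β) *
        ((∫ y, y ∂(kingman β (trunc a q) (Measure.dirac a) i))⁻¹ *
          (∫⁻ x in A, ENNReal.ofReal x ∂(kingman β (trunc a q) (Measure.dirac a) i)).toReal)
        + β * ((trunc a q) A).toReal) atTop
      (nhds ((1-β) * ((∫ y, y ∂ν)⁻¹ * (∫⁻ x in A, ENNReal.ofReal x ∂ν).toReal)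
        + β * ((trunc a q) A).toReal)) :=
    (tendsto_const_nhds.mul ((hm.inv₀ hmν_pos.ne').mul hL)).add tendsto_const_nhds
  have hLHS : Tendsto (fun i => ((kingman β (trunc a q) (Measure.dirac a) (i+1)) A).toReal)
      atTop (nhds ((ν A).toReal)) :=
    (tv_apply hTV hA).comp (tendsto_add_atTop_nat 1)
  have heq : (ν A).toReal
      = (1-β) * ((∫ y, y ∂ν)⁻¹ * (∫⁻ x in A, ENNReal.ofReal x ∂ν).toReal)
        + β * ((trunc a q) A).toReal := by
    refine tendsto_nhds_unique ?_ hRHS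
    simpa only [hseq] using hLHS
  have hptw : ∀ x : ℝ, ENNReal.ofReal (x / Yb β ν)
      = ENNReal.ofReal (1-β) * ((ENNReal.ofReal (∫ y, y ∂ν))⁻¹ * ENNReal.ofReal x) := by
    intro x
    have hx : x / Yb β ν = (1-β) * (x / ∫ y, y ∂ν) := by
      rw [Yb]
      field_simp
    rw [hx, ENNReal.ofReal_mul hb1.le, ENNReal.ofReal_div_of_pos hmν_pos, div_eq_mul_inv,
      mul_comm (ENNReal.ofReal x) _]
  have hlhs2 : ∫⁻ x in A, ENNReal.ofReal (x / Yb β ν) ∂ν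
      = ENNReal.ofReal (1-β) * ((ENNReal.ofReal (∫ y, y ∂ν))⁻¹ * ∫⁻ x in A, ENNReal.ofReal x ∂ν) := by
    simp_rw [hptw]
    rw [lintegral_const_mul _ (ENNReal.measurable_ofReal.const_mul _),
      lintegral_const_mul _ ENNReal.measurable_ofReal]
  rw [hlhs2]
  have hLfin : (∫⁻ x in A, ENNReal.ofReal x ∂ν) ≠ ⊤ :=
    ((lint_fin hβ hq ha hTV hA).trans_lt ENNReal.one_lt_top).ne
  have h1 : (ENNReal.ofReal (∫ y, y ∂ν))⁻¹ ≠ ⊤ :=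
    ENNReal.inv_ne_top.2 (ENNReal.ofReal_pos.2 hmν_pos).ne'
  have hRfin : ENNReal.ofReal (1-β) * ((ENNReal.ofReal (∫ y, y ∂ν))⁻¹ *
      ∫⁻ x in A, ENNReal.ofReal x ∂ν) + ENNReal.ofReal β * trunc a q A ≠ ⊤ :=
    ENNReal.add_ne_top.2 ⟨ENNReal.mul_ne_top ENNReal.ofReal_ne_top
      (ENNReal.mul_ne_top h1 hLfin), ENNReal.mul_ne_top ENNReal.ofReal_ne_top (measure_ne_top _ _)⟩
  refine (ENNReal.toReal_eq_toReal_iff' (measure_ne_top ν A) hRfin).1 ?_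
  rw [toReal_expand hb1.le hβ.1.le hmν_pos hLfin (measure_ne_top _ _)]
  exact heq

lemma fixed_pt_measure (hβ : β ∈ Set.Ioo (0:ℝ) 1) [IsProbabilityMeasure q]
    (hq : q ((Icc (0:ℝ) 1)ᶜ) = 0) (ha : a ∈ Set.Ioc (0:ℝ) 1)
    (hTV : TendstoTV (kingman β (trunc a q) (Measure.dirac a)) ν) :
    ν = ν.withDensity (fun x => ENNReal.ofReal (x / Yb β ν)) + (ENNReal.ofReal β) • trunc a q := by
  refine Measure.ext fun A hA => ?_
  rw [fixed_pt hβ hq ha hTV hA, Measure.add_apply, withDensity_apply _ hA, Measure.smul_apply,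
    smul_eq_mul]

lemma atom_trunc_zero (hβ : β ∈ Set.Ioo (0:ℝ) 1) [IsProbabilityMeasure q]
    (hq : q ((Icc (0:ℝ) 1)ᶜ) = 0) (ha : a ∈ Set.Ioc (0:ℝ) 1)
    (hTV : TendstoTV (kingman β (trunc a q) (Measure.dirac a)) ν) :
    trunc a q {Yb β ν} = 0 := by
  have hνp := tv_prob hβ hq ha hTV
  have hY := (Y_pos hβ hq ha hTV).2
  have h := fixed_pt hβ hq ha hTV (measurableSet_singleton (Yb β ν))
  rw [lintegral_singleton, div_self hY.ne', ENNReal.ofReal_one, one_mul] at h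
  nth_rewrite 1 [← add_zero (ν {Yb β ν})] at h
  have h2 := ((ENNReal.add_right_inj (measure_ne_top ν _)).1 h).symm
  rcases mul_eq_zero.1 h2 with h3 | h3
  · exact absurd h3 (ENNReal.ofReal_pos.2 hβ.1).ne'
  · exact h3

lemma above_Y_zero (hβ : β ∈ Set.Ioo (0:ℝ) 1) [IsProbabilityMeasure q]
    (hq : q ((Icc (0:ℝ) 1)ᶜ) = 0) (ha : a ∈ Set.Ioc (0:ℝ) 1)
    (hTV : TendstoTV (kingman β (trunc a q) (Measure.dirac a)) ν) :
    ν (Ioi (Yb β ν)) = 0 ∧ trunc a q (Ioi (Yb β ν)) = 0 := by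
  have hνp := tv_prob hβ hq ha hTV
  have hY := (Y_pos hβ hq ha hTV).2
  set Y := Yb β ν with hYdef
  have hkey : ∀ n : ℕ, ν (Ici (Y * (1 + ((n:ℝ)+1)⁻¹))) = 0 ∧
      trunc a q (Ici (Y * (1 + ((n:ℝ)+1)⁻¹))) = 0 := by
    intro n
    set c := Y * (1 + ((n:ℝ)+1)⁻¹) with hc
    have hn : (0:ℝ) < (n:ℝ)+1 := by positivity
    have hc1 : (1:ℝ) < 1 + ((n:ℝ)+1)⁻¹ := by
      have : (0:ℝ) < ((n:ℝ)+1)⁻¹ := by positivity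
      linarith
    have h := fixed_pt hβ hq ha hTV (measurableSet_Ici (a := c))
    have hlow : ENNReal.ofReal (1 + ((n:ℝ)+1)⁻¹) * ν (Ici c) ≤
        ∫⁻ x in Ici c, ENNReal.ofReal (x / Y) ∂ν := by
      rw [← setLIntegral_const]
      refine setLIntegral_mono (ENNReal.measurable_ofReal.comp (measurable_id.div_const Y)) ?_
      intro x hx
      apply ENNReal.ofReal_le_ofReal
      rw [hc] at hx
      rw [le_div_iff₀ hY]
      calc (1 + ((n:ℝ)+1)⁻¹) * Y = Y * (1 + ((n:ℝ)+1)⁻¹) := by ring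
      _ ≤ x := hx
    have hν0 : ν (Ici c) = 0 := by
      by_contra hne
      have hfin : ν (Ici c) ≠ ⊤ := measure_ne_top _ _
      have : ν (Ici c) < ENNReal.ofReal (1 + ((n:ℝ)+1)⁻¹) * ν (Ici c) := by
        nth_rewrite 1 [← one_mul (ν (Ici c))]
        exact (ENNReal.mul_lt_mul_left hne hfin) (by
          rw [← ENNReal.ofReal_one]
          exact ENNReal.ofReal_lt_ofReal_iff (by linarith) |>.2 hc1)
      have h2 : ν (Ici c) < ν (Ici c) := by
        calc ν (Ici c) < ENNReal.ofReal (1 + ((n:ℝ)+1)⁻¹) * ν (Ici c) := this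
        _ ≤ ∫⁻ x in Ici c, ENNReal.ofReal (x / Y) ∂ν := hlow
        _ ≤ ∫⁻ x in Ici c, ENNReal.ofReal (x / Y) ∂ν + ENNReal.ofReal β * trunc a q (Ici c) :=
              le_self_add
        _ = ν (Ici c) := h.symm
      exact lt_irrefl _ h2
    refine ⟨hν0, ?_⟩
    rw [hν0] at h
    rw [setLIntegral_measure_zero _ _ hν0, zero_add] at h
    rcases mul_eq_zero.1 h.symm with h3 | h3
    · exact absurd h3 (ENNReal.ofReal_pos.2 hβ.1).ne'
    · exact h3
  have hsub : Ioi Y ⊆ ⋃ n : ℕ, Ici (Y * (1 + ((n:ℝ)+1)⁻¹)) := by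
    intro x hx
    have hx' : Y < x := hx
    have hδ : 0 < x / Y - 1 := by
      rw [lt_sub_iff_add_lt, zero_add, lt_div_iff₀ hY, one_mul]
      exact hx'
    obtain ⟨n, hn⟩ := exists_nat_one_div_lt hδ
    refine Set.mem_iUnion.2 ⟨n, ?_⟩
    show Y * (1 + ((n:ℝ)+1)⁻¹) ≤ x
    rw [one_div] at hn
    have : 1 + ((n:ℝ)+1)⁻¹ ≤ x / Y := by linarith
    calc Y * (1 + ((n:ℝ)+1)⁻¹) ≤ Y * (x / Y) := by
          exact mul_le_mul_of_nonneg_left this hY.le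
    _ = x := by field_simp
  constructor
  · exact measure_mono_null hsub (measure_iUnion_null fun n => (hkey n).1)
  · exact measure_mono_null hsub (measure_iUnion_null fun n => (hkey n).2)



variable {β : ℝ} {q : Measure ℝ} {a : ℝ} {ν : Measure ℝ}

/-- The structural representation of the limit measure. -/
lemma rep (hβ : β ∈ Set.Ioo (0:ℝ) 1) [IsProbabilityMeasure q]
    (hq : q ((Icc (0:ℝ) 1)ᶜ) = 0) (ha : a ∈ Set.Ioc (0:ℝ) 1)
    (hTV : TendstoTV (kingman β (trunc a q) (Measure.dirac a)) ν)
    {A : Set ℝ} (hA : MeasurableSet A) :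
    ν A = ENNReal.ofReal β * ∫⁻ x in A, Psi (Yb β ν) x ∂(trunc a q) + ν ({Yb β ν} ∩ A) := by
  have hνp := tv_prob hβ hq ha hTV
  have hνn := tv_null_compl hβ hq ha hTV
  have hY0 := (Y_pos hβ hq ha hTV).2
  have habove := (above_Y_zero hβ hq ha hTV).1
  set Y := Yb β ν with hYdef
  set w : ℝ → ℝ≥0∞ := fun x => ENNReal.ofReal (x / Y) with hw
  have hwm : Measurable w := ENNReal.measurable_ofReal.comp (measurable_id.div_const Y)
  have hfpm := fixed_pt_measure hβ hq ha hTV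
  have hiter : ∀ n : ℕ, ν A = (∑ j ∈ Finset.range n,
      ENNReal.ofReal β * ∫⁻ x in A, w x ^ j ∂(trunc a q)) + ∫⁻ x in A, w x ^ n ∂ν := by
    intro n
    induction n with
    | zero => simp
    | succ n ih =>
      have hsplit : ∫⁻ x in A, w x ^ n ∂ν
          = ∫⁻ x in A, w x ^ (n+1) ∂ν + ENNReal.ofReal β * ∫⁻ x in A, w x ^ n ∂(trunc a q) := by
        nth_rewrite 1 [hfpm]
        rw [Measure.restrict_add, lintegral_add_measure, Measure.restrict_smul,
          lintegral_smul_measure, restrict_withDensity hA,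
          lintegral_withDensity_eq_lintegral_mul _ hwm (hwm.pow_const n)]
        congr 1
        apply lintegral_congr
        intro x
        show w x * w x ^ n = w x ^ (n+1)
        rw [pow_succ, mul_comm]
      rw [ih, hsplit, Finset.sum_range_succ]
      ring
  have haeν : ∀ᵐ x ∂ν, 0 ≤ x ∧ x ≤ Y := by
    have h1 := ae_of_compl_null hνn
    have h2 : ∀ᵐ x ∂ν, x ∉ Ioi Y := measure_eq_zero_iff_ae_notMem.1 habove
    filter_upwards [h1, h2] with x hx1 hx2
    exact ⟨hx1.1, not_lt.1 (by simpa using hx2)⟩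
  have hlim1 : Tendsto (fun n => ∫⁻ x in A, w x ^ n ∂ν) atTop (nhds (ν ({Y} ∩ A))) := by
    have htarget : ∫⁻ x in A, ({Y}:Set ℝ).indicator (fun _ => (1:ℝ≥0∞)) x ∂ν
        = ν ({Y} ∩ A) := by
      rw [lintegral_indicator (measurableSet_singleton Y), setLIntegral_one,
        Measure.restrict_apply (measurableSet_singleton Y)]
    rw [← htarget]
    refine tendsto_lintegral_of_dominated_convergence (fun _ => (1:ℝ≥0∞))
      (fun n => (hwm.pow_const n)) ?_ ?_ ?_
    · intro n
      refine ae_restrict_of_ae (haeν.mono fun x hx => ?_)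
      exact pow_le_one' (ENNReal.ofReal_le_one.2 ((div_le_one hY0).2 hx.2)) n
    · rw [lintegral_one]
      exact measure_ne_top _ _
    · refine ae_restrict_of_ae (haeν.mono fun x hx => ?_)
      rcases eq_or_lt_of_le hx.2 with heq | hlt
      · have hwx : w x = 1 := by
          rw [hw]
          simp [heq, div_self hY0.ne']
        have hind : ({Y}:Set ℝ).indicator (fun _ => (1:ℝ≥0∞)) x = 1 :=
          Set.indicator_of_mem (by simpa using heq) _
        rw [hind]
        simp [hwx]
      · have hw1 : w x < 1 := by
          rw [hw]
          exact ENNReal.ofReal_lt_one.2 ((div_lt_one hY0).2 hlt)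
        have h0 : ({Y}:Set ℝ).indicator (fun _ => (1:ℝ≥0∞)) x = 0 :=
          Set.indicator_of_notMem (by simpa using hlt.ne) _
        rw [h0]
        exact ENNReal.tendsto_pow_atTop_nhds_zero_of_lt_one hw1
  have hlim2 : Tendsto (fun n => ∑ j ∈ Finset.range n,
      ENNReal.ofReal β * ∫⁻ x in A, w x ^ j ∂(trunc a q)) atTop
      (nhds (ENNReal.ofReal β * ∫⁻ x in A, Psi Y x ∂(trunc a q))) := by
    have hts : ENNReal.ofReal β * ∫⁻ x in A, Psi Y x ∂(trunc a q)
        = ∑' j : ℕ, ENNReal.ofReal β * ∫⁻ x in A, w x ^ j ∂(trunc a q) := by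
      rw [ENNReal.tsum_mul_left, ← lintegral_tsum (fun j => (hwm.pow_const j).aemeasurable)]
      congr 1
      apply lintegral_congr
      intro x
      show Psi Y x = ∑' n : ℕ, w x ^ n
      rw [ENNReal.tsum_geometric]
      rfl
    rw [hts]
    exact ENNReal.tendsto_nat_tsum _
  have hcomb : Tendsto (fun _ : ℕ => ν A) atTop
      (nhds (ENNReal.ofReal β * ∫⁻ x in A, Psi Y x ∂(trunc a q) + ν ({Y} ∩ A))) := by
    have h := hlim2.add hlim1
    convert h using 1
    exact funext fun n => hiter n
  exact (tendsto_nhds_unique hcomb tendsto_const_nhds).symm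

lemma mass_eq (hβ : β ∈ Set.Ioo (0:ℝ) 1) [IsProbabilityMeasure q]
    (hq : q ((Icc (0:ℝ) 1)ᶜ) = 0) (ha : a ∈ Set.Ioc (0:ℝ) 1)
    (hTV : TendstoTV (kingman β (trunc a q) (Measure.dirac a)) ν) :
    ENNReal.ofReal β * (∫⁻ x, Psi (Yb β ν) (min x a) ∂q) + ν {Yb β ν} = 1 := by
  have hνp := tv_prob hβ hq ha hTV
  have h := rep hβ hq ha hTV MeasurableSet.univ
  rw [Measure.restrict_univ, Set.inter_univ, measure_univ] at h
  rw [h]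
  congr 2
  rw [trunc, lintegral_map (measurable_psi _) (measurable_minc a)]

lemma atom_cases (hβ : β ∈ Set.Ioo (0:ℝ) 1) [IsProbabilityMeasure q]
    (hq : q ((Icc (0:ℝ) 1)ᶜ) = 0) (ha : a ∈ Set.Ioc (0:ℝ) 1)
    (hTV : TendstoTV (kingman β (trunc a q) (Measure.dirac a)) ν)
    (hS : ν {Yb β ν} ≠ 0) : Yb β ν = a := by
  by_contra hYa
  have hνp := tv_prob hβ hq ha hTV
  have hQY := atom_trunc_zero hβ hq ha hTV
  have hall : ∀ i : ℕ, (kingman β (trunc a q) (Measure.dirac a) i) {Yb β ν} = 0 := by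
    intro i
    induction i with
    | zero =>
      show Measure.dirac a {Yb β ν} = 0
      rw [Measure.dirac_apply' _ (measurableSet_singleton _)]
      rw [Set.indicator_of_notMem]
      exact fun h => hYa (Set.mem_singleton_iff.1 h).symm
    | succ i ih =>
      rw [step_eval β (trunc a q) (Measure.dirac a) i (iter_m_pos hβ hq ha i)
        (measurableSet_singleton _), lintegral_singleton, ih, hQY]
      simp
  have h1 := tv_apply hTV (A := {Yb β ν}) (measurableSet_singleton _)
  have h1' : Tendsto (fun _ : ℕ => (0:ℝ)) atTop (nhds ((ν {Yb β ν}).toReal)) := by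
    simpa [hall] using h1
  have h3 : (ν {Yb β ν}).toReal = 0 := tendsto_nhds_unique h1' tendsto_const_nhds
  rcases (ENNReal.toReal_eq_zero_iff _).1 h3 with h | h
  · exact hS h
  · exact absurd h (measure_ne_top ν _)



variable {β : ℝ} {q : Measure ℝ} {a : ℝ} {ν : Measure ℝ}

noncomputable def Phi (q : Measure ℝ) (a y : ℝ) : ℝ≥0∞ := ∫⁻ x, Psi y (min x a) ∂q

lemma mass_eq_Phi (hβ : β ∈ Set.Ioo (0:ℝ) 1) [IsProbabilityMeasure q]
    (hq : q ((Icc (0:ℝ) 1)ᶜ) = 0) (ha : a ∈ Set.Ioc (0:ℝ) 1)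
    (hTV : TendstoTV (kingman β (trunc a q) (Measure.dirac a)) ν) :
    ENNReal.ofReal β * Phi q a (Yb β ν) + ν {Yb β ν} = 1 :=
  mass_eq hβ hq ha hTV

lemma Phi_lim_fin (hβ : β ∈ Set.Ioo (0:ℝ) 1) [IsProbabilityMeasure q]
    (hq : q ((Icc (0:ℝ) 1)ᶜ) = 0) (ha : a ∈ Set.Ioc (0:ℝ) 1)
    (hTV : TendstoTV (kingman β (trunc a q) (Measure.dirac a)) ν) :
    Phi q a (Yb β ν) ≠ ⊤ := by
  intro h
  have hm := mass_eq_Phi hβ hq ha hTV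
  rw [h, ENNReal.mul_top (ENNReal.ofReal_pos.2 hβ.1).ne'] at hm
  simp at hm

lemma Y_le (hβ : β ∈ Set.Ioo (0:ℝ) 1) [IsProbabilityMeasure q]
    (hq : q ((Icc (0:ℝ) 1)ᶜ) = 0) (ha : a ∈ Set.Ioc (0:ℝ) 1)
    (hTV : TendstoTV (kingman β (trunc a q) (Measure.dirac a)) ν) :
    Yb β ν ≤ (1-β)⁻¹ := by
  have hνp := tv_prob hβ hq ha hTV
  have hb1 : (0:ℝ) < 1 - β := by linarith [hβ.2]
  have h1 : ∫ y, y ∂ν ≤ 1 := by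
    rw [(mean_facts (tv_null_compl hβ hq ha hTV) ha).1]
    calc (∫⁻ x, ENNReal.ofReal x ∂ν).toReal ≤ (1:ℝ≥0∞).toReal :=
      ENNReal.toReal_mono ENNReal.one_ne_top (mean_facts (tv_null_compl hβ hq ha hTV) ha).2
    _ = 1 := by simp
  rw [Yb, div_le_iff₀ hb1, inv_mul_cancel₀ hb1.ne']
  exact h1

lemma rep_measure (hβ : β ∈ Set.Ioo (0:ℝ) 1) [IsProbabilityMeasure q]
    (hq : q ((Icc (0:ℝ) 1)ᶜ) = 0) (ha : a ∈ Set.Ioc (0:ℝ) 1)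
    (hTV : TendstoTV (kingman β (trunc a q) (Measure.dirac a)) ν) :
    ν = (trunc a q).withDensity (fun x => ENNReal.ofReal β * Psi (Yb β ν) x)
        + ν {Yb β ν} • Measure.dirac (Yb β ν) := by
  have hνp := tv_prob hβ hq ha hTV
  refine Measure.ext fun A hA => ?_
  rw [rep hβ hq ha hTV hA, Measure.add_apply, withDensity_apply _ hA, Measure.smul_apply,
    Measure.dirac_apply' _ hA, lintegral_const_mul _ (measurable_psi _), smul_eq_mul]
  congr 1
  by_cases hmem : Yb β ν ∈ A
  · rw [Set.indicator_of_mem hmem, Set.inter_eq_left.2 (Set.singleton_subset_iff.2 hmem),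
      Pi.one_apply, mul_one]
  · rw [Set.indicator_of_notMem hmem, mul_zero, Set.singleton_inter_eq_empty.2 hmem,
      measure_empty]

lemma rep_integral (hβ : β ∈ Set.Ioo (0:ℝ) 1) [IsProbabilityMeasure q]
    (hq : q ((Icc (0:ℝ) 1)ᶜ) = 0) (ha : a ∈ Set.Ioc (0:ℝ) 1)
    (hTV : TendstoTV (kingman β (trunc a q) (Measure.dirac a)) ν)
    (f : BoundedContinuousFunction ℝ ℝ) :
    ∫ x, f x ∂ν = β * ∫ x, (Psi (Yb β ν) (min x a)).toReal * f (min x a) ∂q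
      + (ν {Yb β ν}).toReal * f (Yb β ν) := by
  have hνp := tv_prob hβ hq ha hTV
  haveI := isProb_trunc a q
  set Y := Yb β ν with hYdef
  set ρ : ℝ → ℝ≥0∞ := fun x => ENNReal.ofReal β * Psi Y x with hρ
  have hρm : Measurable ρ := (measurable_psi Y).const_mul _
  have hae1 : ∀ᵐ x ∂(trunc a q), x ∈ Icc 0 a := ae_of_compl_null (trunc_compl hq ha)
  have hIci : trunc a q (Ici Y) = 0 := by
    have hsub : Ici Y ⊆ {Y} ∪ Ioi Y := by
      intro x hx
      rcases eq_or_lt_of_le (mem_Ici.1 hx) with h | h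
      · exact Or.inl (by simp [h.symm])
      · exact Or.inr h
    exact measure_mono_null hsub
      (measure_union_null (atom_trunc_zero hβ hq ha hTV) (above_Y_zero hβ hq ha hTV).2)
  have hQae : ∀ᵐ x ∂(trunc a q), ρ x ≠ ⊤ := by
    have h2 : ∀ᵐ x ∂(trunc a q), x ∉ Ici Y := measure_eq_zero_iff_ae_notMem.1 hIci
    filter_upwards [hae1, h2] with x hx1 hx2
    exact ENNReal.mul_ne_top ENNReal.ofReal_ne_top
      (psi_ne_top hx1.1 (lt_of_not_ge fun h => hx2 h))
  have hrm : ν = (trunc a q).withDensity (fun x => ((ρ x).toNNReal : ℝ≥0∞))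
      + ν {Y} • Measure.dirac Y := by
    conv_lhs => rw [rep_measure hβ hq ha hTV]
    congr 1
    exact withDensity_congr_ae (hQae.mono fun x hx => (ENNReal.coe_toNNReal hx).symm)
  have hPhiTot : (∫⁻ x, Psi Y x ∂(trunc a q)) ≠ ⊤ := by
    have h := Phi_lim_fin hβ hq ha hTV
    rw [Phi] at h
    rwa [trunc, lintegral_map (measurable_psi _) (measurable_minc a)]
  haveI hfin1 : IsFiniteMeasure ((trunc a q).withDensity (fun x => ((ρ x).toNNReal : ℝ≥0∞))) := by
    constructor
    rw [withDensity_apply _ MeasurableSet.univ, Measure.restrict_univ]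
    calc ∫⁻ x, ((ρ x).toNNReal : ℝ≥0∞) ∂(trunc a q)
        ≤ ∫⁻ x, ρ x ∂(trunc a q) := lintegral_mono fun x => ENNReal.coe_toNNReal_le_self
    _ = ENNReal.ofReal β * ∫⁻ x, Psi Y x ∂(trunc a q) :=
          lintegral_const_mul _ (measurable_psi Y)
    _ < ⊤ := ENNReal.mul_lt_top ENNReal.ofReal_lt_top (lt_top_iff_ne_top.2 hPhiTot)
  haveI hfin2 : IsFiniteMeasure (ν {Y} • Measure.dirac Y) := by
    constructor
    rw [Measure.smul_apply, smul_eq_mul]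
    exact ENNReal.mul_lt_top (lt_top_iff_ne_top.2 (measure_ne_top ν _))
      (lt_top_iff_ne_top.2 (measure_ne_top _ _))
  conv_lhs => rw [hrm]
  rw [integral_add_measure (f.integrable _) (f.integrable _), integral_smul_measure,
    integral_dirac,
    integral_withDensity_eq_integral_smul (f := fun x => (ρ x).toNNReal)
      (by exact ENNReal.measurable_toNNReal.comp hρm) f]
  have hfun : (fun z => ((ρ z).toNNReal : ℝ≥0) • f z) = fun z => β * ((Psi Y z).toReal * f z) := by
    funext z
    rw [NNReal.smul_def]
    show ((ρ z).toNNReal : ℝ) * f z = _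
    have h1 : ((ρ z).toNNReal : ℝ) = (ρ z).toReal := rfl
    rw [h1, hρ]
    show (ENNReal.ofReal β * Psi Y z).toReal * f z = _
    rw [ENNReal.toReal_mul, ENNReal.toReal_ofReal hβ.1.le, mul_assoc]
  rw [hfun]
  have hmeasint : AEStronglyMeasurable (fun z => β * ((Psi Y z).toReal * f z))
      (Measure.map (fun x => min x a) q) :=
    ((measurable_const.mul (((measurable_psi Y).ennreal_toReal).mul
      f.continuous.measurable))).aestronglyMeasurable
  rw [show trunc a q = Measure.map (fun x => min x a) q from rfl,
    integral_map (measurable_minc a).aemeasurable hmeasint, integral_const_mul, smul_eq_mul]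



variable {β : ℝ} {q : Measure ℝ}

lemma Phi_anti [IsProbabilityMeasure q] (hq : q ((Icc (0:ℝ) 1)ᶜ) = 0)
    {a y y' : ℝ} (hy : 0 < y) (hyy : y ≤ y') (ha : 0 < a) :
    Phi q a y' ≤ Phi q a y := by
  refine lintegral_mono_ae ((ae_of_compl_null hq).mono fun x hx => ?_)
  exact psi_anti (le_min hx.1 ha.le) hy hyy

lemma Phi_mono_a [IsProbabilityMeasure q] {a a' y : ℝ} (haa : a ≤ a') (hy : 0 < y) :
    Phi q a y ≤ Phi q a' y := by
  refine lintegral_mono fun x => ?_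
  exact psi_mono hy (min_le_min le_rfl haa)

lemma Phi_one_eq (hq : q ((Icc (0:ℝ) 1)ᶜ) = 0) (y : ℝ) :
    Phi q 1 y = ∫⁻ x, Psi y x ∂q := by
  refine lintegral_congr_ae ((ae_of_compl_null hq).mono fun x hx => ?_)
  show Psi y (min x 1) = Psi y x
  rw [min_eq_left hx.2]

lemma Phi_eq_of_null (hq : q ((Icc (0:ℝ) 1)ᶜ) = 0) {a y : ℝ} (h0 : q (Ici a) = 0) :
    Phi q a y = ∫⁻ x, Psi y x ∂q := by
  have h1 : ∀ᵐ x ∂q, x ∉ Ici a := measure_eq_zero_iff_ae_notMem.1 h0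
  refine lintegral_congr_ae (h1.mono fun x hx => ?_)
  show Psi y (min x a) = Psi y x
  rw [min_eq_left (le_of_lt (lt_of_not_ge fun h => hx h))]

lemma mq1_pos (hq0 : q (Ioc (0:ℝ) 1) ≠ 0) : 0 < ∫⁻ x, ENNReal.ofReal x ∂q := by
  rw [pos_iff_ne_zero]
  intro hz
  have h := (lintegral_eq_zero_iff ENNReal.measurable_ofReal).1 hz
  have h2 : q {x : ℝ | ¬ ENNReal.ofReal x = 0} = 0 := ae_iff.1 h
  refine hq0 (measure_mono_null ?_ h2)
  intro x hx
  simp only [Set.mem_setOf_eq]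
  exact (ENNReal.ofReal_pos.2 hx.1).ne'

lemma Phi_strict_gap (hq : q ((Icc (0:ℝ) 1)ᶜ) = 0) {u t : ℝ} (hu : 1 ≤ u) (hut : u < t) :
    Phi q 1 t + ENNReal.ofReal (u⁻¹ - t⁻¹) * ∫⁻ x, ENNReal.ofReal x ∂q ≤ Phi q 1 u := by
  rw [Phi_one_eq hq, Phi_one_eq hq]
  have hδ : (0:ℝ) ≤ u⁻¹ - t⁻¹ := by
    have hu0 : (0:ℝ) < u := lt_of_lt_of_le one_pos hu
    have := inv_anti₀ hu0 hut.le
    linarith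
  calc (∫⁻ x, Psi t x ∂q) + ENNReal.ofReal (u⁻¹ - t⁻¹) * ∫⁻ x, ENNReal.ofReal x ∂q
      = ∫⁻ x, (Psi t x + ENNReal.ofReal (u⁻¹ - t⁻¹) * ENNReal.ofReal x) ∂q := by
        rw [lintegral_add_left (measurable_psi t), lintegral_const_mul _ ENNReal.measurable_ofReal]
  _ ≤ ∫⁻ x, Psi u x ∂q := by
        refine lintegral_mono_ae ((ae_of_compl_null hq).mono fun x hx => ?_)
        have h1 : ENNReal.ofReal (u⁻¹ - t⁻¹) * ENNReal.ofReal x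
            = ENNReal.ofReal ((u⁻¹ - t⁻¹) * x) := (ENNReal.ofReal_mul hδ).symm
        rw [h1]
        exact psi_strict hu hut hx.1 hx.2

/-- when `q` has no mass on `(0,1]`, `Phi = 1`. -/
lemma Phi_degenerate (hq : q ((Icc (0:ℝ) 1)ᶜ) = 0) [IsProbabilityMeasure q]
    (hq0 : q (Ioc (0:ℝ) 1) = 0) {a y : ℝ} (ha : 0 < a) (hy : 0 < y) :
    Phi q a y = 1 := by
  have h1 : ∀ᵐ x ∂q, x ∉ Ioc (0:ℝ) 1 := measure_eq_zero_iff_ae_notMem.1 hq0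
  have : ∀ᵐ x ∂q, Psi y (min x a) = 1 := by
    filter_upwards [ae_of_compl_null hq, h1] with x hx1 hx2
    have hx0 : x = 0 := by
      rcases eq_or_lt_of_le hx1.1 with h | h
      · exact h.symm
      · exact absurd ⟨h, hx1.2⟩ hx2
    rw [hx0, min_eq_left ha.le]
    exact psi_zero hy.ne'
  rw [Phi, lintegral_congr_ae this]
  simp



variable {β : ℝ} {q : Measure ℝ} {a : ℝ} {ν : Measure ℝ}

lemma one_mem_Ioc : (1:ℝ) ∈ Set.Ioc (0:ℝ) 1 := ⟨one_pos, le_rfl⟩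

lemma SC1 (hβ : β ∈ Set.Ioo (0:ℝ) 1) [IsProbabilityMeasure q]
    (hq : q ((Icc (0:ℝ) 1)ᶜ) = 0) {ν1 : Measure ℝ}
    (hTV1 : TendstoTV (kingman β (trunc 1 q) (Measure.dirac 1)) ν1)
    {t : ℝ} (ht : Yb β ν1 < t) : ENNReal.ofReal β * Phi q 1 t < 1 := by
  have hx1 : 1 ≤ Yb β ν1 := (Y_pos hβ hq one_mem_Ioc hTV1).1
  have ht0 : (0:ℝ) < t := lt_of_lt_of_le (lt_of_lt_of_le one_pos hx1) ht.le
  by_cases hq0 : q (Ioc (0:ℝ) 1) = 0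
  · rw [Phi_degenerate hq hq0 one_pos ht0, mul_one]
    exact ENNReal.ofReal_lt_one.2 hβ.2
  · have hmq := mq1_pos hq0
    have hgap := Phi_strict_gap hq hx1 ht
    have hmass := mass_eq_Phi hβ hq one_mem_Ioc hTV1
    set c := ENNReal.ofReal β * Phi q 1 t with hc
    set p := ENNReal.ofReal β * (ENNReal.ofReal ((Yb β ν1)⁻¹ - t⁻¹) * ∫⁻ x, ENNReal.ofReal x ∂q)
      with hp
    have hcp : c + p ≤ 1 := by
      calc c + p = ENNReal.ofReal β * (Phi q 1 t
            + ENNReal.ofReal ((Yb β ν1)⁻¹ - t⁻¹) * ∫⁻ x, ENNReal.ofReal x ∂q) := by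
            rw [mul_add]
      _ ≤ ENNReal.ofReal β * Phi q 1 (Yb β ν1) := mul_le_mul_right hgap _
      _ ≤ 1 := by rw [← hmass]; exact le_self_add
    have hδpos : (0:ℝ) < (Yb β ν1)⁻¹ - t⁻¹ := by
      have h0 : (0:ℝ) < Yb β ν1 := lt_of_lt_of_le one_pos hx1
      have := inv_strictAnti₀ h0 ht
      linarith
    have hpne : p ≠ 0 := by
      rw [hp]
      refine mul_ne_zero (ENNReal.ofReal_pos.2 hβ.1).ne' (mul_ne_zero ?_ hmq.ne')
      exact (ENNReal.ofReal_pos.2 hδpos).ne'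
    have hcne : c ≠ ⊤ := ((le_self_add.trans hcp).trans_lt ENNReal.one_lt_top).ne
    exact lt_of_lt_of_le (ENNReal.lt_add_right hcne hpne) hcp

lemma S_lt_one_of_ne (hβ : β ∈ Set.Ioo (0:ℝ) 1) [IsProbabilityMeasure q]
    (hq : q ((Icc (0:ℝ) 1)ᶜ) = 0) (ha : a ∈ Set.Ioc (0:ℝ) 1)
    (hTV : TendstoTV (kingman β (trunc a q) (Measure.dirac a)) ν)
    (hS : ν {Yb β ν} ≠ 0) : ENNReal.ofReal β * Phi q a (Yb β ν) < 1 := by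
  have hmass := mass_eq_Phi hβ hq ha hTV
  have hfin : ENNReal.ofReal β * Phi q a (Yb β ν) ≠ ⊤ := by
    intro h
    rw [h] at hmass
    simp at hmass
  calc ENNReal.ofReal β * Phi q a (Yb β ν)
      < ENNReal.ofReal β * Phi q a (Yb β ν) + ν {Yb β ν} := ENNReal.lt_add_right hfin hS
  _ = 1 := hmass

lemma Yupper (hβ : β ∈ Set.Ioo (0:ℝ) 1) [IsProbabilityMeasure q]
    (hq : q ((Icc (0:ℝ) 1)ᶜ) = 0) {ν1 : Measure ℝ}
    (hTV1 : TendstoTV (kingman β (trunc 1 q) (Measure.dirac 1)) ν1)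
    (ha : a ∈ Set.Ioo (0:ℝ) 1)
    (hTV : TendstoTV (kingman β (trunc a q) (Measure.dirac a)) ν)
    {t : ℝ} (ht : Yb β ν1 < t) : Yb β ν < t := by
  by_contra hcon
  push_neg at hcon
  have ha' : a ∈ Set.Ioc (0:ℝ) 1 := ⟨ha.1, ha.2.le⟩
  have hx1 : 1 ≤ Yb β ν1 := (Y_pos hβ hq one_mem_Ioc hTV1).1
  have ht1 : 1 < t := lt_of_le_of_lt hx1 ht
  have hS : ν {Yb β ν} = 0 := by
    by_contra hS
    have := atom_cases hβ hq ha' hTV hS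
    rw [this] at hcon
    linarith [ha.2]
  have hmass := mass_eq_Phi hβ hq ha' hTV
  rw [hS, add_zero] at hmass
  have hchain : Phi q a (Yb β ν) ≤ Phi q 1 t := by
    calc Phi q a (Yb β ν) ≤ Phi q a t := Phi_anti hq (lt_trans one_pos ht1) hcon ha.1
    _ ≤ Phi q 1 t := Phi_mono_a ha.2.le (lt_trans one_pos ht1)
  have : (1:ℝ≥0∞) < 1 := by
    calc (1:ℝ≥0∞) = ENNReal.ofReal β * Phi q a (Yb β ν) := hmass.symm
    _ ≤ ENNReal.ofReal β * Phi q 1 t := mul_le_mul_right hchain _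
    _ < 1 := SC1 hβ hq hTV1 ht
  exact absurd this (lt_irrefl 1)

lemma q_Ici_null_of_atom (hβ : β ∈ Set.Ioo (0:ℝ) 1) [IsProbabilityMeasure q]
    (hq : q ((Icc (0:ℝ) 1)ᶜ) = 0) (ha : a ∈ Set.Ioc (0:ℝ) 1)
    (hTV : TendstoTV (kingman β (trunc a q) (Measure.dirac a)) ν)
    (hYa : Yb β ν = a) : q (Ici a) = 0 := by
  have hfin := Phi_lim_fin hβ hq ha hTV
  rw [hYa] at hfin
  have hmeas : Measurable fun x : ℝ => Psi a (min x a) :=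
    (measurable_psi a).comp (measurable_minc a)
  have hae := ae_lt_top hmeas hfin
  refine measure_eq_zero_iff_ae_notMem.2 (hae.mono fun x hx hmem => ?_)
  rw [min_eq_right (hmem : a ≤ x), psi_top ha.1 le_rfl] at hx
  exact absurd hx (lt_irrefl ⊤)

lemma Szero (hβ : β ∈ Set.Ioo (0:ℝ) 1) [IsProbabilityMeasure q]
    (hq : q ((Icc (0:ℝ) 1)ᶜ) = 0) {ν1 : Measure ℝ}
    (hTV1 : TendstoTV (kingman β (trunc 1 q) (Measure.dirac 1)) ν1)
    (hx : 1 < Yb β ν1) (ha : a ∈ Set.Ioo (0:ℝ) 1)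
    (hTV : TendstoTV (kingman β (trunc a q) (Measure.dirac a)) ν) :
    ν {Yb β ν} = 0 := by
  by_contra hS
  have ha' : a ∈ Set.Ioc (0:ℝ) 1 := ⟨ha.1, ha.2.le⟩
  have hYa : Yb β ν = a := atom_cases hβ hq ha' hTV hS
  have hq0 : q (Ici a) = 0 := q_Ici_null_of_atom hβ hq ha' hTV hYa
  -- S1 = 0 since Yb β ν1 ≠ 1
  have hS1 : ν1 {Yb β ν1} = 0 := by
    by_contra hS1
    have := atom_cases hβ hq one_mem_Ioc hTV1 hS1
    rw [this] at hx
    exact absurd hx (lt_irrefl 1)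
  have hmass1 := mass_eq_Phi hβ hq one_mem_Ioc hTV1
  rw [hS1, add_zero] at hmass1
  -- mass at a, with Phi q a a = Phi q 1 a
  have hlt := S_lt_one_of_ne hβ hq ha' hTV hS
  rw [hYa] at hlt
  have heqPhi : Phi q a a = Phi q 1 a := by
    rw [Phi_eq_of_null hq hq0, Phi_one_eq hq]
  rw [heqPhi] at hlt
  have hchain : Phi q 1 (Yb β ν1) ≤ Phi q 1 a := by
    refine Phi_anti hq ha.1 ?_ one_pos
    linarith [ha.2]
  have : (1:ℝ≥0∞) < 1 := by
    calc (1:ℝ≥0∞) = ENNReal.ofReal β * Phi q 1 (Yb β ν1) := hmass1.symm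
    _ ≤ ENNReal.ofReal β * Phi q 1 a := mul_le_mul_right hchain _
    _ < 1 := hlt
  exact absurd this (lt_irrefl 1)



variable {β : ℝ} {q : Measure ℝ} {a : ℝ} {ν : Measure ℝ}

lemma Phi_MCT [IsProbabilityMeasure q] {u : ℝ} (hu : 0 < u) :
    Tendsto (fun n : ℕ => Phi q (1 - ((n:ℝ)+1)⁻¹) u) atTop (nhds (Phi q 1 u)) := by
  refine lintegral_tendsto_of_tendsto_of_monotone
    (fun n => ((measurable_psi u).comp (measurable_minc _)).aemeasurable) ?_ ?_
  · refine ae_of_all _ fun x => ?_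
    intro m n hmn
    apply psi_mono hu
    apply min_le_min le_rfl
    have h1 : ((n:ℝ)+1)⁻¹ ≤ ((m:ℝ)+1)⁻¹ := by
      apply inv_anti₀ (by positivity)
      have : (m:ℝ) ≤ (n:ℝ) := Nat.cast_le.2 hmn
      linarith
    linarith
  · refine ae_of_all _ fun x => ?_
    have h1 : Tendsto (fun n : ℕ => 1 - ((n:ℝ)+1)⁻¹) atTop (nhds 1) := by
      have h0 : Tendsto (fun n : ℕ => ((n:ℝ)+1)⁻¹) atTop (nhds 0) := by
        simpa [one_div] using tendsto_one_div_add_atTop_nhds_zero_nat (𝕜 := ℝ)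
      simpa using tendsto_const_nhds.sub h0
    have h2 : Tendsto (fun n : ℕ => min x (1 - ((n:ℝ)+1)⁻¹)) atTop (nhds (min x 1)) :=
      ((continuous_const.min continuous_id).tendsto 1).comp h1
    have h3 : Tendsto (fun n : ℕ => ENNReal.ofReal (min x (1 - ((n:ℝ)+1)⁻¹) / u)) atTop
        (nhds (ENNReal.ofReal (min x 1 / u))) := ENNReal.tendsto_ofReal (h2.div_const u)
    have h4 : Tendsto (fun n : ℕ => (1:ℝ≥0∞) - ENNReal.ofReal (min x (1-((n:ℝ)+1)⁻¹)/u)) atTop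
        (nhds (1 - ENNReal.ofReal (min x 1 / u))) :=
      ENNReal.Tendsto.sub tendsto_const_nhds h3 (Or.inl ENNReal.one_ne_top)
    exact ENNReal.tendsto_inv_iff.2 h4

lemma Ylower (hβ : β ∈ Set.Ioo (0:ℝ) 1) [IsProbabilityMeasure q]
    (hq : q ((Icc (0:ℝ) 1)ᶜ) = 0) (plim : ℝ → Measure ℝ)
    (hplim : ∀ a ∈ Set.Ioc (0:ℝ) 1,
      TendstoTV (kingman β (trunc a q) (Measure.dirac a)) (plim a))
    {u : ℝ} (hu : u < Yb β (plim 1)) :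
    ∀ᶠ a in nhdsWithin 1 (Set.Iio 1), u < Yb β (plim a) := by
  have hTV1 := hplim 1 one_mem_Ioc
  rcases lt_or_ge u 1 with hu1 | hu1
  · have hmem : Set.Ioo (max u 0) 1 ∈ nhdsWithin 1 (Set.Iio 1) :=
      Ioo_mem_nhdsLT_of_mem ⟨max_lt hu1 one_pos, le_rfl⟩
    filter_upwards [hmem] with a haIoo
    have ha' : a ∈ Set.Ioc (0:ℝ) 1 := ⟨lt_of_le_of_lt (le_max_right u 0) haIoo.1, haIoo.2.le⟩
    exact lt_of_le_of_lt (le_max_left u 0)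
      (lt_of_lt_of_le haIoo.1 (Y_pos hβ hq ha' (hplim a ha')).1)
  · have hx : 1 < Yb β (plim 1) := lt_of_le_of_lt hu1 hu
    have hu0 : (0:ℝ) < u := lt_of_lt_of_le one_pos hu1
    have hS1 : plim 1 {Yb β (plim 1)} = 0 := by
      by_contra hS1
      have h := atom_cases hβ hq one_mem_Ioc hTV1 hS1
      rw [h] at hx
      exact absurd hx (lt_irrefl 1)
    have hmass1 := mass_eq_Phi hβ hq one_mem_Ioc hTV1
    rw [hS1, add_zero] at hmass1
    have hq0 : q (Ioc (0:ℝ) 1) ≠ 0 := by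
      intro hq0
      rw [Phi_degenerate hq hq0 one_pos (lt_trans one_pos hx), mul_one] at hmass1
      exact absurd hmass1 (ENNReal.ofReal_lt_one.2 hβ.2).ne
    have hmq := mq1_pos hq0
    have hgap := Phi_strict_gap hq hu1 hu
    set B := (ENNReal.ofReal β)⁻¹ with hB
    have hβ0 : ENNReal.ofReal β ≠ 0 := (ENNReal.ofReal_pos.2 hβ.1).ne'
    have hBmul : ENNReal.ofReal β * B = 1 := ENNReal.mul_inv_cancel hβ0 ENNReal.ofReal_ne_top
    have hδpos : (0:ℝ) < u⁻¹ - (Yb β (plim 1))⁻¹ := by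
      have := inv_strictAnti₀ hu0 hu
      linarith
    have hBlt : B < Phi q 1 u := by
      by_contra hle
      push_neg at hle
      have h1 : ENNReal.ofReal β * Phi q 1 u ≤ 1 := by
        calc ENNReal.ofReal β * Phi q 1 u ≤ ENNReal.ofReal β * B := mul_le_mul_right hle _
        _ = 1 := hBmul
      have h2 : 1 + ENNReal.ofReal β * (ENNReal.ofReal (u⁻¹ - (Yb β (plim 1))⁻¹) *
          ∫⁻ x, ENNReal.ofReal x ∂q) ≤ ENNReal.ofReal β * Phi q 1 u := by
        calc 1 + ENNReal.ofReal β * (ENNReal.ofReal (u⁻¹ - (Yb β (plim 1))⁻¹) *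
            ∫⁻ x, ENNReal.ofReal x ∂q)
            = ENNReal.ofReal β * (Phi q 1 (Yb β (plim 1))
              + ENNReal.ofReal (u⁻¹ - (Yb β (plim 1))⁻¹) * ∫⁻ x, ENNReal.ofReal x ∂q) := by
              rw [mul_add, hmass1]
        _ ≤ ENNReal.ofReal β * Phi q 1 u := mul_le_mul_right hgap _
      have hppos : ENNReal.ofReal β * (ENNReal.ofReal (u⁻¹ - (Yb β (plim 1))⁻¹) *
          ∫⁻ x, ENNReal.ofReal x ∂q) ≠ 0 :=
        mul_ne_zero hβ0 (mul_ne_zero (ENNReal.ofReal_pos.2 hδpos).ne' hmq.ne')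
      have hcontra : (1:ℝ≥0∞) < 1 :=
        lt_of_lt_of_le (ENNReal.lt_add_right ENNReal.one_ne_top hppos) (h2.trans h1)
      exact absurd hcontra (lt_irrefl 1)
    have hMCT := Phi_MCT (q := q) (u := u) hu0
    have hev : ∀ᶠ n : ℕ in atTop, B < Phi q (1 - ((n:ℝ)+1)⁻¹) u :=
      hMCT.eventually (eventually_gt_nhds hBlt)
    obtain ⟨n₀, hBn, h1n⟩ := (hev.and (eventually_ge_atTop 1)).exists
    set a₀ := 1 - ((n₀:ℝ)+1)⁻¹ with ha₀
    have hn₀1 : (1:ℝ) ≤ (n₀:ℝ) := by exact_mod_cast h1n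
    have ha₀pos : 0 < a₀ := by
      rw [ha₀]
      have h5 : ((n₀:ℝ)+1)⁻¹ ≤ 2⁻¹ := by
        apply inv_anti₀ (by norm_num)
        linarith
      norm_num
      linarith
    have ha₀lt : a₀ < 1 := by
      rw [ha₀]
      have : (0:ℝ) < ((n₀:ℝ)+1)⁻¹ := by positivity
      linarith
    have hmem : Set.Ioo a₀ 1 ∈ nhdsWithin 1 (Set.Iio 1) :=
      Ioo_mem_nhdsLT_of_mem ⟨ha₀lt, le_rfl⟩
    filter_upwards [hmem] with a haIoo
    have ha' : a ∈ Set.Ioo (0:ℝ) 1 := ⟨lt_trans ha₀pos haIoo.1, haIoo.2⟩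
    have ha'' : a ∈ Set.Ioc (0:ℝ) 1 := ⟨ha'.1, ha'.2.le⟩
    by_contra hcon
    push_neg at hcon
    have hSa := Szero hβ hq hTV1 hx ha' (hplim a ha'')
    have hmassa := mass_eq_Phi hβ hq ha'' (hplim a ha'')
    rw [hSa, add_zero] at hmassa
    have hYapos : 0 < Yb β (plim a) :=
      lt_of_lt_of_le ha'.1 (Y_pos hβ hq ha'' (hplim a ha'')).1
    have hchain : B < Phi q a (Yb β (plim a)) := by
      calc B < Phi q a₀ u := hBn
      _ ≤ Phi q a u := Phi_mono_a haIoo.1.le hu0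
      _ ≤ Phi q a (Yb β (plim a)) := Phi_anti hq hYapos hcon ha'.1
    have hcontra : (1:ℝ≥0∞) < 1 := by
      calc (1:ℝ≥0∞) = ENNReal.ofReal β * B := hBmul.symm
      _ < ENNReal.ofReal β * Phi q a (Yb β (plim a)) :=
            (ENNReal.mul_lt_mul_right hβ0 ENNReal.ofReal_ne_top) hchain
      _ = 1 := hmassa
    exact absurd hcontra (lt_irrefl 1)

lemma Ytendsto (hβ : β ∈ Set.Ioo (0:ℝ) 1) [IsProbabilityMeasure q]
    (hq : q ((Icc (0:ℝ) 1)ᶜ) = 0) (plim : ℝ → Measure ℝ)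
    (hplim : ∀ a ∈ Set.Ioc (0:ℝ) 1,
      TendstoTV (kingman β (trunc a q) (Measure.dirac a)) (plim a)) :
    Tendsto (fun a => Yb β (plim a)) (nhdsWithin 1 (Set.Iio 1)) (nhds (Yb β (plim 1))) := by
  rw [tendsto_order]
  constructor
  · intro u hu
    exact Ylower hβ hq plim hplim hu
  · intro t ht
    have hmem : Set.Ioo (0:ℝ) 1 ∈ nhdsWithin 1 (Set.Iio 1) :=
      Ioo_mem_nhdsLT_of_mem ⟨one_pos, le_rfl⟩
    filter_upwards [hmem] with a haIoo
    exact Yupper hβ hq (hplim 1 one_mem_Ioc) haIoo (hplim a ⟨haIoo.1, haIoo.2.le⟩) ht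



variable {β : ℝ} {q : Measure ℝ} {a : ℝ} {ν : Measure ℝ}

lemma mass_real (hβ : β ∈ Set.Ioo (0:ℝ) 1) [IsProbabilityMeasure q]
    (hq : q ((Icc (0:ℝ) 1)ᶜ) = 0) (ha : a ∈ Set.Ioc (0:ℝ) 1)
    (hTV : TendstoTV (kingman β (trunc a q) (Measure.dirac a)) ν) :
    β * ∫ x, (Psi (Yb β ν) (min x a)).toReal ∂q + (ν {Yb β ν}).toReal = 1 := by
  have hνp := tv_prob hβ hq ha hTV
  have h := rep_integral hβ hq ha hTV (BoundedContinuousFunction.const ℝ (1:ℝ))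
  simp only [BoundedContinuousFunction.const_apply, mul_one] at h
  rw [integral_const, probReal_univ] at h
  simp at h
  exact h.symm

lemma psi_integrable (hβ : β ∈ Set.Ioo (0:ℝ) 1) [IsProbabilityMeasure q]
    (hq : q ((Icc (0:ℝ) 1)ᶜ) = 0) (ha : a ∈ Set.Ioc (0:ℝ) 1)
    (hTV : TendstoTV (kingman β (trunc a q) (Measure.dirac a)) ν) :
    Integrable (fun x => (Psi (Yb β ν) (min x a)).toReal) q := by
  refine ⟨(((measurable_psi _).comp (measurable_minc a)).ennreal_toReal).aestronglyMeasurable, ?_⟩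
  rw [hasFiniteIntegral_iff_norm]
  have hb : ∀ x : ℝ, ENNReal.ofReal ‖(Psi (Yb β ν) (min x a)).toReal‖
      ≤ Psi (Yb β ν) (min x a) := fun x => by
    rw [Real.norm_eq_abs, abs_of_nonneg ENNReal.toReal_nonneg]
    exact ENNReal.ofReal_toReal_le
  calc ∫⁻ x, ENNReal.ofReal ‖(Psi (Yb β ν) (min x a)).toReal‖ ∂q
      ≤ ∫⁻ x, Psi (Yb β ν) (min x a) ∂q := lintegral_mono hb
  _ < ⊤ := lt_top_iff_ne_top.2 (Phi_lim_fin hβ hq ha hTV)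

lemma integrable_psi_mul (hβ : β ∈ Set.Ioo (0:ℝ) 1) [IsProbabilityMeasure q]
    (hq : q ((Icc (0:ℝ) 1)ᶜ) = 0) (ha : a ∈ Set.Ioc (0:ℝ) 1)
    (hTV : TendstoTV (kingman β (trunc a q) (Measure.dirac a)) ν)
    (g : BoundedContinuousFunction ℝ ℝ) :
    Integrable (fun x => (Psi (Yb β ν) (min x a)).toReal * g (min x a)) q := by
  have h1 : Integrable (fun x => g (min x a) * (Psi (Yb β ν) (min x a)).toReal) q := by
    refine (psi_integrable hβ hq ha hTV).bdd_mul (c := ‖g‖)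
      ((g.continuous.measurable.comp (measurable_minc a)).aestronglyMeasurable) (ae_of_all _ fun x => ?_)
    exact g.norm_coe_le_norm _
  exact h1.congr (ae_of_all _ fun x => mul_comm _ _)

lemma Sa_toReal_le_one [IsFiniteMeasure ν] (hν : ν Set.univ = 1) (s : Set ℝ) :
    (ν s).toReal ≤ 1 := by
  have := measure_mono (Set.subset_univ s) (μ := ν)
  rw [hν] at this
  calc (ν s).toReal ≤ (1:ℝ≥0∞).toReal := ENNReal.toReal_mono ENNReal.one_ne_top this
  _ = 1 := by simp



variable {β : ℝ} {q : Measure ℝ}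

lemma main_convA (hβ : β ∈ Set.Ioo (0:ℝ) 1) [IsProbabilityMeasure q]
    (hq : q ((Icc (0:ℝ) 1)ᶜ) = 0) (plim : ℝ → Measure ℝ)
    (hplim : ∀ a ∈ Set.Ioc (0:ℝ) 1,
      TendstoTV (kingman β (trunc a q) (Measure.dirac a)) (plim a))
    (hxgt : 1 < Yb β (plim 1)) (f : BoundedContinuousFunction ℝ ℝ) :
    Tendsto (fun a => ∫ x, f x ∂(plim a)) (nhdsWithin 1 (Set.Iio 1))
      (nhds (∫ x, f x ∂(plim 1))) := by
  have hTV1 := hplim 1 one_mem_Ioc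
  have hYt := Ytendsto hβ hq plim hplim
  have hS1 : plim 1 {Yb β (plim 1)} = 0 := by
    by_contra hS1
    have h := atom_cases hβ hq one_mem_Ioc hTV1 hS1
    rw [h] at hxgt
    exact absurd hxgt (lt_irrefl 1)
  set x' := Yb β (plim 1) with hx'
  set t₀ := (1 + x')/2 with ht₀
  have ht₀1 : 1 < t₀ := by rw [ht₀]; linarith
  have ht₀x : t₀ < x' := by rw [ht₀]; linarith
  have hx'0 : (0:ℝ) < x' := lt_trans one_pos hxgt
  have htarget : ∫ x, f x ∂(plim 1) = β * ∫ x, (Psi x' (min x 1)).toReal * f (min x 1) ∂q := by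
    rw [rep_integral hβ hq one_mem_Ioc hTV1 f, ← hx', hS1]
    simp
  rw [htarget]
  have hEv : ∀ᶠ a in nhdsWithin 1 (Set.Iio 1),
      β * ∫ x, (Psi (Yb β (plim a)) (min x a)).toReal * f (min x a) ∂q
        = ∫ x, f x ∂(plim a) := by
    filter_upwards [Ioo_mem_nhdsLT_of_mem (show (1:ℝ) ∈ Set.Ioc (0:ℝ) 1 from one_mem_Ioc)]
      with a haIoo
    have ha'' : a ∈ Set.Ioc (0:ℝ) 1 := ⟨haIoo.1, haIoo.2.le⟩
    rw [rep_integral hβ hq ha'' (hplim a ha'') f,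
      Szero hβ hq hTV1 hxgt haIoo (hplim a ha'')]
    simp
  refine Tendsto.congr' hEv ?_
  refine Tendsto.const_mul β ?_
  refine tendsto_integral_filter_of_dominated_convergence
    (bound := fun _ => (1 - 1/t₀)⁻¹ * ‖f‖) ?_ ?_ ?_ ?_
  · filter_upwards [Ioo_mem_nhdsLT_of_mem (show (1:ℝ) ∈ Set.Ioc (0:ℝ) 1 from one_mem_Ioc)]
      with a haIoo
    exact ((((measurable_psi _).comp (measurable_minc a)).ennreal_toReal).mul
      (f.continuous.measurable.comp (measurable_minc a))).aestronglyMeasurable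
  · filter_upwards [Ylower hβ hq plim hplim (show t₀ < Yb β (plim 1) from ht₀x),
      Ioo_mem_nhdsLT_of_mem (show (1:ℝ) ∈ Set.Ioc (0:ℝ) 1 from one_mem_Ioc)]
      with a hYa haIoo
    refine (ae_of_compl_null hq).mono fun x hx => ?_
    rw [norm_mul]
    have h1 : ‖(Psi (Yb β (plim a)) (min x a)).toReal‖ ≤ (1 - 1/t₀)⁻¹ := by
      rw [Real.norm_eq_abs, abs_of_nonneg ENNReal.toReal_nonneg]
      have := psi_le_of_le (le_min hx.1 haIoo.1.le) (min_le_of_left_le hx.2) ht₀1 hYa.le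
      simpa [one_div] using this
    refine mul_le_mul h1 (f.norm_coe_le_norm _) (norm_nonneg _) ?_
    have h2 : (0:ℝ) < 1 - 1/t₀ := by
      have : 1/t₀ < 1 := by
        rw [div_lt_one (lt_trans one_pos ht₀1)]
        exact ht₀1
      linarith
    positivity
  · exact integrable_const _
  · refine (ae_of_compl_null hq).mono fun x hx => ?_
    have hxlt : x < x' := lt_of_le_of_lt hx.2 hxgt
    have hcont : Continuous (fun a : ℝ => min x a) :=
      (continuous_const : Continuous fun _ : ℝ => x).min continuous_id
    have hmin : Tendsto (fun a : ℝ => min x a) (nhdsWithin 1 (Set.Iio 1)) (nhds x) := by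
      have h2 := hcont.tendsto (1:ℝ)
      rw [min_eq_left hx.2] at h2
      exact h2.mono_left nhdsWithin_le_nhds
    have hEv2 : ∀ᶠ a in nhdsWithin 1 (Set.Iio 1),
        (1 - (min x a)/(Yb β (plim a)))⁻¹ * f (min x a)
          = (Psi (Yb β (plim a)) (min x a)).toReal * f (min x a) := by
      filter_upwards [Ylower hβ hq plim hplim (show t₀ < Yb β (plim 1) from ht₀x),
        Ioo_mem_nhdsLT_of_mem (show (1:ℝ) ∈ Set.Ioc (0:ℝ) 1 from one_mem_Ioc)]
        with a hYa haIoo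
      rw [psi_toReal (le_min hx.1 haIoo.1.le)
        (lt_of_le_of_lt (min_le_of_left_le hx.2) (lt_of_lt_of_le ht₀1 hYa.le))]
    refine Tendsto.congr' hEv2 ?_
    have htv : (Psi x' (min x 1)).toReal * f (min x 1) = (1 - x/x')⁻¹ * f x := by
      rw [min_eq_left hx.2, psi_toReal hx.1 hxlt]
    rw [htv]
    have hden : Tendsto (fun a => 1 - (min x a)/(Yb β (plim a))) (nhdsWithin 1 (Set.Iio 1))
        (nhds (1 - x/x')) := tendsto_const_nhds.sub (hmin.div hYt hx'0.ne')
    have hden0 : 1 - x/x' ≠ 0 := by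
      have : x/x' < 1 := (div_lt_one hx'0).2 hxlt
      linarith
    exact (hden.inv₀ hden0).mul ((f.continuous.tendsto x).comp hmin)



variable {β : ℝ} {q : Measure ℝ}

lemma main_convB (hβ : β ∈ Set.Ioo (0:ℝ) 1) [IsProbabilityMeasure q]
    (hq : q ((Icc (0:ℝ) 1)ᶜ) = 0) (plim : ℝ → Measure ℝ)
    (hplim : ∀ a ∈ Set.Ioc (0:ℝ) 1,
      TendstoTV (kingman β (trunc a q) (Measure.dirac a)) (plim a))
    (hxeq : Yb β (plim 1) = 1) (f : BoundedContinuousFunction ℝ ℝ) :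
    Tendsto (fun a => ∫ x, f x ∂(plim a)) (nhdsWithin 1 (Set.Iio 1))
      (nhds (∫ x, f x ∂(plim 1))) := by
  have hTV1 := hplim 1 one_mem_Ioc
  have hYt := Ytendsto hβ hq plim hplim
  rw [hxeq] at hYt
  rw [Metric.tendsto_nhds]
  intro ε hε
  obtain ⟨δ0, hδ0pos, hδ0⟩ := Metric.continuousAt_iff.1 (f.continuous.continuousAt (x := 1))
    (ε/16) (by positivity)
  set δ := min δ0 1 with hδdef
  have hδpos : 0 < δ := lt_min hδ0pos one_pos
  have hδ1 : δ ≤ 1 := min_le_right _ _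
  set g := f - BoundedContinuousFunction.const ℝ (f 1) with hgdef
  have hgz : ∀ z : ℝ, g z = f z - f 1 := fun z => by rw [hgdef]; simp
  have hgb : ∀ z : ℝ, |z - 1| < δ → |g z| < ε/16 := fun z hz => by
    rw [hgz]
    have h := hδ0 (show dist z 1 < δ0 from lt_of_lt_of_le (by rwa [Real.dist_eq]) (min_le_left _ _))
    rwa [Real.dist_eq] at h
  set c := 1 - δ/2 with hc
  have hc0 : 0 < c := by rw [hc]; linarith
  have hc1 : c < 1 := by rw [hc]; linarith
  set t₀ := (1 + c)/2 with ht₀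
  have hct₀ : c < t₀ := by rw [ht₀]; linarith
  have ht₀1 : t₀ < 1 := by rw [ht₀]; linarith
  have ht₀0 : 0 < t₀ := by rw [ht₀]; linarith
  have hred : ∀ b, b ∈ Set.Ioc (0:ℝ) 1 → ∫ x, f x ∂(plim b) = (∫ x, g x ∂(plim b)) + f 1 := by
    intro b hb
    have hp : IsProbabilityMeasure (plim b) := tv_prob hβ hq hb (hplim b hb)
    have h1 : ∫ x, g x ∂(plim b) = (∫ x, f x ∂(plim b)) - f 1 := by
      have h2 : (fun x => g x) = fun x => f x - f 1 := funext hgz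
      rw [h2, integral_sub (f.integrable _) (integrable_const _), integral_const, probReal_univ]
      simp
    rw [h1]; ring
  -- head convergence
  have hheadT : Tendsto
      (fun a => ∫ x in Iic c, (Psi (Yb β (plim a)) (min x a)).toReal * g (min x a) ∂q)
      (nhdsWithin 1 (Set.Iio 1))
      (nhds (∫ x in Iic c, (Psi 1 (min x 1)).toReal * g (min x 1) ∂q)) := by
    refine tendsto_integral_filter_of_dominated_convergence
      (bound := fun _ => (1 - c/t₀)⁻¹ * (2*‖f‖)) ?_ ?_ ?_ ?_
    · filter_upwards [Ioo_mem_nhdsLT_of_mem (show (1:ℝ) ∈ Set.Ioc t₀ 1 from ⟨ht₀1, le_rfl⟩)]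
        with a haIoo
      exact (((((measurable_psi _).comp (measurable_minc a)).ennreal_toReal).mul
        (g.continuous.measurable.comp (measurable_minc a))).aestronglyMeasurable).restrict
    · filter_upwards [Ioo_mem_nhdsLT_of_mem (show (1:ℝ) ∈ Set.Ioc t₀ 1 from ⟨ht₀1, le_rfl⟩)]
        with a haIoo
      have ha'' : a ∈ Set.Ioc (0:ℝ) 1 := ⟨lt_trans ht₀0 haIoo.1, haIoo.2.le⟩
      have hYa : t₀ ≤ Yb β (plim a) :=
        le_trans haIoo.1.le (Y_pos hβ hq ha'' (hplim a ha'')).1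
      filter_upwards [ae_restrict_of_ae (ae_of_compl_null hq), ae_restrict_mem measurableSet_Iic]
        with x hx hxc
      rw [norm_mul]
      have h1 : ‖(Psi (Yb β (plim a)) (min x a)).toReal‖ ≤ (1 - c/t₀)⁻¹ := by
        rw [Real.norm_eq_abs, abs_of_nonneg ENNReal.toReal_nonneg]
        exact psi_le_of_le (le_min hx.1 (lt_trans ht₀0 haIoo.1).le)
          ((min_le_left x a).trans hxc) hct₀ hYa
      have h2 : ‖g (min x a)‖ ≤ 2 * ‖f‖ := by
        rw [hgz, Real.norm_eq_abs]
        calc |f (min x a) - f 1| ≤ |f (min x a)| + |f 1| := abs_sub _ _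
        _ ≤ ‖f‖ + ‖f‖ := add_le_add
              (by simpa [Real.norm_eq_abs] using f.norm_coe_le_norm (min x a))
              (by simpa [Real.norm_eq_abs] using f.norm_coe_le_norm 1)
        _ = 2 * ‖f‖ := by ring
      refine mul_le_mul h1 h2 (norm_nonneg _) ?_
      have h3 : c/t₀ < 1 := (div_lt_one ht₀0).2 hct₀
      have h4 : (0:ℝ) < 1 - c/t₀ := by linarith
      positivity
    · exact integrable_const _
    · filter_upwards [ae_restrict_of_ae (ae_of_compl_null hq), ae_restrict_mem measurableSet_Iic]
        with x hx hxc
      have hxlt : x < 1 := lt_of_le_of_lt hxc hc1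
      have hcont : Continuous (fun a : ℝ => min x a) :=
        (continuous_const : Continuous fun _ : ℝ => x).min continuous_id
      have hmin : Tendsto (fun a : ℝ => min x a) (nhdsWithin 1 (Set.Iio 1)) (nhds x) := by
        have h2 := hcont.tendsto (1:ℝ)
        rw [min_eq_left hx.2] at h2
        exact h2.mono_left nhdsWithin_le_nhds
      have hEv2 : ∀ᶠ a in nhdsWithin 1 (Set.Iio 1),
          (1 - (min x a)/(Yb β (plim a)))⁻¹ * g (min x a)
            = (Psi (Yb β (plim a)) (min x a)).toReal * g (min x a) := by
        filter_upwards [Ioo_mem_nhdsLT_of_mem (show (1:ℝ) ∈ Set.Ioc t₀ 1 from ⟨ht₀1, le_rfl⟩)]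
          with a haIoo
        have ha'' : a ∈ Set.Ioc (0:ℝ) 1 := ⟨lt_trans ht₀0 haIoo.1, haIoo.2.le⟩
        have hYa : t₀ ≤ Yb β (plim a) :=
          le_trans haIoo.1.le (Y_pos hβ hq ha'' (hplim a ha'')).1
        rw [psi_toReal (le_min hx.1 (lt_trans ht₀0 haIoo.1).le)
          (lt_of_le_of_lt ((min_le_left x a).trans hxc) (lt_of_lt_of_le hct₀ hYa))]
      refine Tendsto.congr' hEv2 ?_
      have htv : (Psi 1 (min x 1)).toReal * g (min x 1) = (1 - x/1)⁻¹ * g x := by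
        rw [min_eq_left hx.2, psi_toReal hx.1 (by simpa using hxlt)]
      rw [htv]
      have hden : Tendsto (fun a => 1 - (min x a)/(Yb β (plim a))) (nhdsWithin 1 (Set.Iio 1))
          (nhds (1 - x/1)) := tendsto_const_nhds.sub (hmin.div hYt one_ne_zero)
      have hden0 : 1 - x/(1:ℝ) ≠ 0 := by
        rw [div_one]
        intro h
        rw [sub_eq_zero] at h
        exact absurd h.symm hxlt.ne
      exact (hden.inv₀ hden0).mul ((g.continuous.tendsto x).comp hmin)
  have hheadev := Metric.tendsto_nhds.1 hheadT (ε/4) (by positivity)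
  have key : ∀ᶠ a in nhdsWithin 1 (Set.Iio 1),
      |(∫ x, g x ∂(plim a)) - ∫ x, g x ∂(plim 1)| < ε := by
    filter_upwards [hheadev, Metric.tendsto_nhds.1 hYt δ hδpos,
      Ioo_mem_nhdsLT_of_mem (show (1:ℝ) ∈ Set.Ioc t₀ 1 from ⟨ht₀1, le_rfl⟩)]
      with a hhead hYδ haIoo
    have ha'' : a ∈ Set.Ioc (0:ℝ) 1 := ⟨lt_trans ht₀0 haIoo.1, haIoo.2.le⟩
    have hTVa := hplim a ha''
    have hpa : IsProbabilityMeasure (plim a) := tv_prob hβ hq ha'' hTVa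
    have hp1 : IsProbabilityMeasure (plim 1) := tv_prob hβ hq one_mem_Ioc hTV1
    have hrepa := rep_integral hβ hq ha'' hTVa g
    have hrep1 := rep_integral hβ hq one_mem_Ioc hTV1 g
    rw [hxeq] at hrep1
    have hg1 : g (1:ℝ) = 0 := by rw [hgz]; ring
    rw [hg1, mul_zero, add_zero] at hrep1
    have hmassa := mass_real hβ hq ha'' hTVa
    have hmass1 := mass_real hβ hq one_mem_Ioc hTV1
    rw [hxeq] at hmass1
    have hint_a := integrable_psi_mul hβ hq ha'' hTVa g
    have hint_1 : Integrable (fun x => (Psi 1 (min x 1)).toReal * g (min x 1)) q := by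
      have h := integrable_psi_mul hβ hq one_mem_Ioc hTV1 g
      rwa [hxeq] at h
    have hψint_a := psi_integrable hβ hq ha'' hTVa
    have hψint_1 : Integrable (fun x => (Psi 1 (min x 1)).toReal) q := by
      have h := psi_integrable hβ hq one_mem_Ioc hTV1
      rwa [hxeq] at h
    -- tail bound (general template)
    have htail : ∀ (Y' b : ℝ), b ∈ Set.Ioc (0:ℝ) 1 → c < b →
        Integrable (fun x => (Psi Y' (min x b)).toReal * g (min x b)) q →
        Integrable (fun x => (Psi Y' (min x b)).toReal) q →
        |∫ x in Ioi c, (Psi Y' (min x b)).toReal * g (min x b) ∂q|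
          ≤ (ε/16) * ∫ x, (Psi Y' (min x b)).toReal ∂q := by
      intro Y' b hb hcb hint hψint
      have habs : ∀ x : ℝ, |(Psi Y' (min x b)).toReal * g (min x b)|
          = (Psi Y' (min x b)).toReal * |g (min x b)| := fun x => by
        rw [abs_mul, abs_of_nonneg ENNReal.toReal_nonneg]
      have hint' : Integrable (fun x => (Psi Y' (min x b)).toReal * |g (min x b)|)
          (q.restrict (Ioi c)) :=
        (hint.restrict.abs).congr (ae_of_all _ fun x => habs x)
      have step1 : |∫ x in Ioi c, (Psi Y' (min x b)).toReal * g (min x b) ∂q|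
          ≤ ∫ x in Ioi c, (Psi Y' (min x b)).toReal * |g (min x b)| ∂q := by
        have h := norm_integral_le_integral_norm (μ := q.restrict (Ioi c))
          (f := fun x => (Psi Y' (min x b)).toReal * g (min x b))
        simpa using h
      have step2 : ∫ x in Ioi c, (Psi Y' (min x b)).toReal * |g (min x b)| ∂q
          ≤ ∫ x in Ioi c, (Psi Y' (min x b)).toReal * (ε/16) ∂q := by
        refine integral_mono_ae hint' (hψint.restrict.mul_const _) ?_
        filter_upwards [ae_restrict_of_ae (ae_of_compl_null hq), ae_restrict_mem measurableSet_Ioi]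
          with x hx hxc
        refine mul_le_mul_of_nonneg_left ?_ ENNReal.toReal_nonneg
        refine (hgb _ ?_).le
        have h1 : c < min x b := lt_min hxc hcb
        have h2 : min x b ≤ 1 := min_le_of_left_le hx.2
        rw [abs_sub_comm, abs_of_nonneg (by linarith)]
        rw [hc] at h1
        linarith [hδpos]
      have step3 : ∫ x in Ioi c, (Psi Y' (min x b)).toReal * (ε/16) ∂q
          = (ε/16) * ∫ x in Ioi c, (Psi Y' (min x b)).toReal ∂q := by
        rw [integral_mul_const, mul_comm]
      have step4 : ∫ x in Ioi c, (Psi Y' (min x b)).toReal ∂q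
          ≤ ∫ x, (Psi Y' (min x b)).toReal ∂q :=
        setIntegral_le_integral hψint (ae_of_all _ fun x => ENNReal.toReal_nonneg)
      calc |∫ x in Ioi c, (Psi Y' (min x b)).toReal * g (min x b) ∂q|
          ≤ ∫ x in Ioi c, (Psi Y' (min x b)).toReal * |g (min x b)| ∂q := step1
      _ ≤ ∫ x in Ioi c, (Psi Y' (min x b)).toReal * (ε/16) ∂q := step2
      _ = (ε/16) * ∫ x in Ioi c, (Psi Y' (min x b)).toReal ∂q := step3
      _ ≤ (ε/16) * ∫ x, (Psi Y' (min x b)).toReal ∂q := by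
            refine mul_le_mul_of_nonneg_left step4 (by positivity)
    have hψtot_a : ∫ x, (Psi (Yb β (plim a)) (min x a)).toReal ∂q ≤ 1/β := by
      have hSnn : (0:ℝ) ≤ ((plim a) {Yb β (plim a)}).toReal := ENNReal.toReal_nonneg
      have h2 : β * ∫ x, (Psi (Yb β (plim a)) (min x a)).toReal ∂q ≤ 1 := by linarith [hmassa]
      rw [le_div_iff₀ hβ.1, mul_comm]
      exact h2
    have hψtot_1 : ∫ x, (Psi 1 (min x 1)).toReal ∂q ≤ 1/β := by
      have hSnn : (0:ℝ) ≤ ((plim 1) {(1:ℝ)}).toReal := ENNReal.toReal_nonneg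
      have h2 : β * ∫ x, (Psi 1 (min x 1)).toReal ∂q ≤ 1 := by linarith [hmass1]
      rw [le_div_iff₀ hβ.1, mul_comm]
      exact h2
    have htail_a := htail (Yb β (plim a)) a ha'' (lt_trans hct₀ haIoo.1) hint_a hψint_a
    have htail_1 := htail 1 1 one_mem_Ioc hc1 hint_1 hψint_1
    -- the atom term
    have hatom : |((plim a) {Yb β (plim a)}).toReal * g (Yb β (plim a))| ≤ ε/16 := by
      rw [abs_mul, abs_of_nonneg (ENNReal.toReal_nonneg)]
      have hS1le : ((plim a) {Yb β (plim a)}).toReal ≤ 1 :=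
        Sa_toReal_le_one (measure_univ) _
      have hgY : |g (Yb β (plim a))| ≤ ε/16 := by
        refine (hgb _ ?_).le
        rw [← Real.dist_eq]
        exact hYδ
      calc ((plim a) {Yb β (plim a)}).toReal * |g (Yb β (plim a))|
          ≤ 1 * |g (Yb β (plim a))| := by
            refine mul_le_mul_of_nonneg_right hS1le (abs_nonneg _)
      _ ≤ 1 * (ε/16) := by
            refine mul_le_mul_of_nonneg_left hgY (by norm_num)
      _ = ε/16 := by ring
    -- split and combine
    have hsplit_a : ∫ x, (Psi (Yb β (plim a)) (min x a)).toReal * g (min x a) ∂q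
        = (∫ x in Iic c, (Psi (Yb β (plim a)) (min x a)).toReal * g (min x a) ∂q)
          + ∫ x in Ioi c, (Psi (Yb β (plim a)) (min x a)).toReal * g (min x a) ∂q := by
      rw [← Set.compl_Iic]
      exact (integral_add_compl measurableSet_Iic hint_a).symm
    have hsplit_1 : ∫ x, (Psi 1 (min x 1)).toReal * g (min x 1) ∂q
        = (∫ x in Iic c, (Psi 1 (min x 1)).toReal * g (min x 1) ∂q)
          + ∫ x in Ioi c, (Psi 1 (min x 1)).toReal * g (min x 1) ∂q := by
      rw [← Set.compl_Iic]
      exact (integral_add_compl measurableSet_Iic hint_1).symm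
    rw [hrepa, hrep1, hsplit_a, hsplit_1]
    rw [Real.dist_eq] at hhead
    have hβ1 : β ≤ 1 := hβ.2.le
    have hTa : β * |∫ x in Ioi c, (Psi (Yb β (plim a)) (min x a)).toReal * g (min x a) ∂q|
        ≤ ε/16 := by
      calc β * |∫ x in Ioi c, (Psi (Yb β (plim a)) (min x a)).toReal * g (min x a) ∂q|
          ≤ β * ((ε/16) * (1/β)) := by
            refine mul_le_mul_of_nonneg_left ?_ hβ.1.le
            exact htail_a.trans (mul_le_mul_of_nonneg_left hψtot_a (by positivity))
      _ = ε/16 := by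
            field_simp [hβ.1.ne']

    have hT1 : β * |∫ x in Ioi c, (Psi 1 (min x 1)).toReal * g (min x 1) ∂q| ≤ ε/16 := by
      calc β * |∫ x in Ioi c, (Psi 1 (min x 1)).toReal * g (min x 1) ∂q|
          ≤ β * ((ε/16) * (1/β)) := by
            refine mul_le_mul_of_nonneg_left ?_ hβ.1.le
            exact htail_1.trans (mul_le_mul_of_nonneg_left hψtot_1 (by positivity))
      _ = ε/16 := by
            field_simp [hβ.1.ne']

    have hH : β * |(∫ x in Iic c, (Psi (Yb β (plim a)) (min x a)).toReal * g (min x a) ∂q)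
        - ∫ x in Iic c, (Psi 1 (min x 1)).toReal * g (min x 1) ∂q| ≤ ε/4 := by
      calc β * |(∫ x in Iic c, (Psi (Yb β (plim a)) (min x a)).toReal * g (min x a) ∂q)
          - ∫ x in Iic c, (Psi 1 (min x 1)).toReal * g (min x 1) ∂q|
          ≤ 1 * (ε/4) := by
            refine mul_le_mul hβ1 hhead.le (abs_nonneg _) one_pos.le
      _ = ε/4 := by ring
    -- final triangle inequality
    set Ha := ∫ x in Iic c, (Psi (Yb β (plim a)) (min x a)).toReal * g (min x a) ∂q
    set Ta := ∫ x in Ioi c, (Psi (Yb β (plim a)) (min x a)).toReal * g (min x a) ∂q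
    set H1 := ∫ x in Iic c, (Psi 1 (min x 1)).toReal * g (min x 1) ∂q
    set T1 := ∫ x in Ioi c, (Psi 1 (min x 1)).toReal * g (min x 1) ∂q
    set SA := ((plim a) {Yb β (plim a)}).toReal * g (Yb β (plim a))
    have hid : β * (Ha + Ta) + SA - β * (H1 + T1)
        = β * (Ha - H1) + (β * Ta - β * T1 + SA) := by ring
    calc |β * (Ha + Ta) + SA - β * (H1 + T1)|
        = |β * (Ha - H1) + (β * Ta - β * T1 + SA)| := by rw [hid]
    _ ≤ |β * (Ha - H1)| + |β * Ta - β * T1 + SA| := abs_add_le _ _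
    _ ≤ |β * (Ha - H1)| + (|β * Ta - β * T1| + |SA|) := by
          refine add_le_add_right (abs_add_le _ _) _
    _ ≤ |β * (Ha - H1)| + (|β * Ta| + |β * T1| + |SA|) := by
          refine add_le_add_right (add_le_add_left (abs_sub _ _) _) _
    _ = β * |Ha - H1| + (β * |Ta| + β * |T1| + |SA|) := by
          rw [abs_mul, abs_mul, abs_mul, abs_of_nonneg hβ.1.le]
    _ ≤ ε/4 + (ε/16 + ε/16 + ε/16) := by
          refine add_le_add hH (add_le_add (add_le_add hTa hT1) hatom)
    _ < ε := by linarith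
  filter_upwards [key, Ioo_mem_nhdsLT_of_mem (show (1:ℝ) ∈ Set.Ioc (0:ℝ) 1 from one_mem_Ioc)]
    with a hkey haIoo
  rw [Real.dist_eq, hred a ⟨haIoo.1, haIoo.2.le⟩, hred 1 one_mem_Ioc]
  have hclean : ((∫ x, g x ∂(plim a)) + f 1) - ((∫ x, g x ∂(plim 1)) + f 1)
      = (∫ x, g x ∂(plim a)) - ∫ x, g x ∂(plim 1) := by ring
  rw [hclean]
  exact hkey


end Stmt14

/-- Corollary 12 of the paper, Assumption 3 for Kingman's model.
For each `0 < a ≤ 1` let `p^{a,*}` be the total-variation limit of the sequence started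
from `δ_a` with mutant distribution `q^a`. Then `p^{a,*}` converges weakly to `p^{1,*}`
as `a → 1⁻`. -/
theorem stmt14 (β : ℝ) (hβ : β ∈ Set.Ioo (0:ℝ) 1)
    (q : MeasureTheory.Measure ℝ) [IsProbabilityMeasure q]
    (hq : q ((Set.Icc (0:ℝ) 1)ᶜ) = 0)
    (plim : ℝ → MeasureTheory.Measure ℝ)
    (hplim : ∀ a ∈ Set.Ioc (0:ℝ) 1,
      TendstoTV (kingman β (trunc a q) (MeasureTheory.Measure.dirac a)) (plim a)) :
    ∀ f : BoundedContinuousFunction ℝ ℝ,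
      Filter.Tendsto (fun a => ∫ x, f x ∂(plim a)) (nhdsWithin 1 (Set.Iio 1))
        (nhds (∫ x, f x ∂(plim 1))) := by
  intro f
  rcases eq_or_lt_of_le
      (Stmt14.Y_pos hβ hq Stmt14.one_mem_Ioc (hplim 1 Stmt14.one_mem_Ioc)).1 with hxeq | hxgt
  · exact Stmt14.main_convB hβ hq plim hplim hxeq.symm f
  · exact Stmt14.main_convA hβ hq plim hplim hxgt f
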